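/- arXiv:1911.00230 — 4 statements merged into one kernel-verified Lean document; each statement's English description precedes it below -/
import Mathlib

section
/- Let $G$ be a finite simple graph and $v$ a vertex of $G$. For every subset $S \subseteq V(G)$, the cut-rank of $S$ in $G*v$ equals the cut-rank of $S$ in $G$, where $G*v$ denotes local complementation at $v$. -/
open scoped Classical

/-- The cut-rank of `S`: the `𝔽₂`-rank of the `S × (V \ S)` submatrix of the
adjacency matrix. -/
noncomputable def cutRank {V : Type*} [Fintype V] (G : SimpleGraph V) (S : Set V) : ℕ :=
  Matrix.rank (Matrix.of fun (x : S) (y : ↥Sᶜ) =>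
    if G.Adj x.1 y.1 then (1 : ZMod 2) else 0)

/-- Local complementation at a vertex `v`. -/
def localComp {V : Type*} (G : SimpleGraph V) (v : V) : SimpleGraph V where
  Adj x y := x ≠ y ∧ Xor' (G.Adj x y) (G.Adj v x ∧ G.Adj v y)
  symm := ⟨by
    intro x y ⟨hne, h⟩
    refine ⟨hne.symm, ?_⟩
    have h1 := G.adj_comm x y
    unfold Xor' at *
    rw [← h1, and_comm]; exact h⟩
  loopless := ⟨fun x h => h.1 rfl⟩

/-- `(1 + a bᵀ)² = 1` over `𝔽₂` when `b ⬝ᵥ a = 0`. -/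
theorem sq_aux {n : Type*} [Fintype n] [DecidableEq n] (a b : n → ZMod 2)
    (h : dotProduct b a = 0) :
    (1 + Matrix.vecMulVec a b) * (1 + Matrix.vecMulVec a b) = 1 := by
  have hVV : Matrix.vecMulVec a b * Matrix.vecMulVec a b = 0 := by
    ext i j
    simp only [Matrix.mul_apply, Matrix.vecMulVec_apply, Matrix.zero_apply]
    calc ∑ t, a i * b t * (a t * b j) = a i * b j * (dotProduct b a) := by
          rw [dotProduct, Finset.mul_sum]; congr 1; ext t; ring
      _ = 0 := by rw [h]; ring
  have h2 : (Matrix.vecMulVec a b : Matrix n n (ZMod 2)) + Matrix.vecMulVec a b = 0 := by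
    ext i j; simp only [Matrix.add_apply, Matrix.zero_apply]; exact CharTwo.add_self_eq_zero _
  rw [add_mul, one_mul, mul_add, mul_one, hVV, add_zero, add_assoc, h2, add_zero]

/-- `1 + a bᵀ` has unit determinant over `𝔽₂` when `b ⬝ᵥ a = 0`. -/
theorem det_aux {n : Type*} [Fintype n] [DecidableEq n] (a b : n → ZMod 2)
    (h : dotProduct b a = 0) :
    IsUnit (1 + Matrix.vecMulVec a b).det := by
  apply IsUnit.of_mul_eq_one _ (?_ : _ * (1 + Matrix.vecMulVec a b).det = 1)
  rw [← Matrix.det_mul, sq_aux a b h, Matrix.det_one]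

/-- Pointwise description of local complementation over `𝔽₂`. -/
theorem adj_aux {V : Type*} (G : SimpleGraph V) (v x z : V) (hxz : x ≠ z) :
    (if (localComp G v).Adj x z then (1:ZMod 2) else 0) =
    (if G.Adj x z then 1 else 0) + (if G.Adj v x then 1 else 0) * (if G.Adj v z then 1 else 0) := by
  simp only [localComp, Xor']
  by_cases h1 : G.Adj x z <;> by_cases h2 : G.Adj v x <;> by_cases h3 : G.Adj v z <;>
    · simp [hxz, h1, h2, h3] <;> decide

/-- Cut-rank is invariant under local complementation. -/
theorem cutRank_localComp {V : Type*} [Fintype V] (G : SimpleGraph V) (v : V) (S : Set V) :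
    cutRank (localComp G v) S = cutRank G S := by
  classical
  set M : Matrix S ↥Sᶜ (ZMod 2) :=
    Matrix.of (fun (x : S) (y : ↥Sᶜ) => if G.Adj x.1 y.1 then (1 : ZMod 2) else 0) with hM
  set M' : Matrix S ↥Sᶜ (ZMod 2) :=
    Matrix.of (fun (x : S) (y : ↥Sᶜ) => if (localComp G v).Adj x.1 y.1 then (1 : ZMod 2) else 0)
    with hM'
  have hne : ∀ (x : S) (z : ↥Sᶜ), x.1 ≠ z.1 := fun x z h => z.2 (h ▸ x.2)
  show M'.rank = M.rank
  by_cases hv : v ∈ S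
  · -- `v ∈ S`: local complementation is a row operation on `M`.
    set vs : ↥S := ⟨v, hv⟩
    set u : ↥S → ZMod 2 := fun x => if G.Adj v x.1 then 1 else 0 with hu
    have hdot : dotProduct (Pi.single vs 1 : ↥S → ZMod 2) u = 0 := by
      simp [single_dotProduct, hu, G.loopless.irrefl v]
      exact G.loopless.irrefl v
    have key : M' = (1 + Matrix.vecMulVec u (Pi.single vs 1)) * M := by
      rw [Matrix.add_mul, Matrix.one_mul]
      ext x z
      have : (Matrix.vecMulVec u (Pi.single vs 1) * M) x z = u x * M vs z := by
        simp only [Matrix.mul_apply, Matrix.vecMulVec_apply, Pi.single_apply]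
        simp [mul_ite, ite_mul, mul_assoc]
      rw [Matrix.add_apply, this]
      exact adj_aux G v x.1 z.1 (hne x z)
    rw [key]
    exact Matrix.rank_mul_eq_right_of_isUnit_det _ M (det_aux _ _ hdot)
  · -- `v ∈ Sᶜ`: local complementation is a column operation on `M`.
    have hv' : v ∈ Sᶜ := hv
    set vc : ↥Sᶜ := ⟨v, hv'⟩
    set w : ↥Sᶜ → ZMod 2 := fun z => if G.Adj v z.1 then 1 else 0 with hw
    have hdot : dotProduct w (Pi.single vc 1 : ↥Sᶜ → ZMod 2) = 0 := by
      simp [dotProduct_single, hw, G.loopless.irrefl v]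
      exact G.loopless.irrefl v
    have key : M' = M * (1 + Matrix.vecMulVec (Pi.single vc 1) w) := by
      rw [Matrix.mul_add, Matrix.mul_one]
      ext x z
      have : (M * Matrix.vecMulVec (Pi.single vc 1) w) x z = M x vc * w z := by
        simp only [Matrix.mul_apply, Matrix.vecMulVec_apply, Pi.single_apply]
        simp [mul_ite, ite_mul, mul_assoc]
      rw [Matrix.add_apply, this]
      have hMxv : M x vc = if G.Adj v x.1 then 1 else 0 := by
        simp only [hM, Matrix.of_apply]
        rw [G.adj_comm]
      rw [hMxv]
      exact adj_aux G v x.1 z.1 (hne x z)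
    rw [key]
    exact Matrix.rank_mul_eq_left_of_isUnit_det _ M (det_aux _ _ hdot)
end

section
/- If a finite simple graph $G$ on at least two vertices has rank-depth $m$, then $G$ has a connected component whose rank-depth is at least $m - 1$. -/
open scoped Classical

/-- A vertex of a tree is a leaf if it has exactly one neighbor. -/
def IsLeaf {t : Type*} (T : SimpleGraph t) (x : t) : Prop :=
  (T.neighborSet x).ncard = 1

/-- The graph obtained from `T` by deleting the vertex `v` (keeping `v` isolated). -/
def avoid {t : Type*} (T : SimpleGraph t) (v : t) : SimpleGraph t where
  Adj a b := T.Adj a b ∧ a ≠ v ∧ b ≠ v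
  symm := ⟨fun a b h => ⟨h.1.symm, h.2.2, h.2.1⟩⟩
  loopless := ⟨fun a h => T.irrefl h.1⟩

/-- `G` has a decomposition `(T, σ)` of width at most `k` and radius at most `r`:
`T` is a tree whose leaves are in bijection `σ` with `V(G)`; for every non-leaf
node `v` of `T` and every union `X` of the blocks of the partition of `V(G)`
induced by the components of `T - v`, the cut-rank of `X` is at most `k`. -/
def HasRankDecomp {V : Type*} [Fintype V] (G : SimpleGraph V) (k r : ℕ) : Prop :=
  ∃ (t : Type) (_ : Fintype t) (T : SimpleGraph t),
    T.IsTree ∧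
    ∃ σ : V ≃ {x : t // IsLeaf T x},
      (∀ v : t, ¬ IsLeaf T v →
        ∀ X : Set V,
          (∀ u u' : V, (avoid T v).Reachable (σ u).1 (σ u').1 → (u ∈ X ↔ u' ∈ X)) →
          cutRank G X ≤ k) ∧
      ∃ c : t, ∀ y : t, T.dist c y ≤ r

/-- The rank-depth of `G`: the least `k` such that `G` admits a decomposition of
width at most `k` and radius at most `k`; zero for graphs with fewer than two vertices. -/
noncomputable def rankDepth {V : Type*} [Fintype V] (G : SimpleGraph V) : ℕ :=
  if Fintype.card V < 2 then 0 else sInf {k | HasRankDecomp G k k}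



section CutRankLemmas

variable {V : Type*} [Fintype V]

lemma cutRank_le_card_left (G : SimpleGraph V) (S : Set V) : cutRank G S ≤ Fintype.card S :=
  Matrix.rank_le_card_height _

lemma cutRank_le_card_right (G : SimpleGraph V) (S : Set V) : cutRank G S ≤ Fintype.card ↥(Sᶜ) :=
  Matrix.rank_le_card_width _

lemma two_mul_cutRank_le (G : SimpleGraph V) (S : Set V) :
    2 * cutRank G S ≤ Fintype.card V := by
  have h1 := cutRank_le_card_left G S
  have h2 := cutRank_le_card_right G S
  have h3 := Fintype.card_congr (Equiv.Set.sumCompl S)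
  rw [Fintype.card_sum] at h3
  omega

lemma cutRank_eq_zero (G : SimpleGraph V) (S : Set V)
    (h : ∀ x ∈ S, ∀ y, G.Adj x y → y ∈ S) : cutRank G S = 0 := by
  have hM : (Matrix.of fun (x : S) (y : ↥Sᶜ) =>
      if G.Adj x.1 y.1 then (1 : ZMod 2) else 0) = 0 := by
    ext x y
    by_cases had : G.Adj x.1 y.1
    · exact absurd (h x.1 x.2 y.1 had) y.2
    · simp [had]
  rw [cutRank, hM, Matrix.rank_zero]

lemma rank_reindex_rect {m n m' n' : Type*} {R : Type*} [CommRing R] [Fintype n] [Fintype n']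
    (e₁ : m ≃ m') (e₂ : n ≃ n') (A : Matrix m n R) :
    ((Matrix.reindex e₁ e₂) A).rank = A.rank := by
  rw [Matrix.rank, Matrix.rank, Matrix.mulVecLin_reindex, LinearMap.range_comp,
    LinearMap.range_comp, LinearEquiv.range, Submodule.map_top, LinearEquiv.finrank_map_eq]

lemma cutRank_map {W : Type*} [Fintype W] {G : SimpleGraph V} {G' : SimpleGraph W}
    (e : G ≃g G') (X : Set V) : cutRank G' (⇑e '' X) = cutRank G X := by
  have hinj : Function.Injective (⇑e) := e.toEquiv.injective
  have hbij : Function.Bijective (⇑e) := e.toEquiv.bijective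
  let e₁ : ↥X ≃ ↥(⇑e '' X) := Equiv.Set.image ⇑e X hinj
  have hc : ⇑e '' Xᶜ = (⇑e '' X)ᶜ := Set.image_compl_eq hbij
  let e₂ : ↥(Xᶜ) ≃ ↥((⇑e '' X)ᶜ) := (Equiv.Set.image ⇑e Xᶜ hinj).trans (Equiv.setCongr hc)
  have : (Matrix.of fun (x : ↥(⇑e '' X)) (y : ↥(⇑e '' X)ᶜ) =>
      if G'.Adj x.1 y.1 then (1 : ZMod 2) else 0) =
      (Matrix.reindex e₁ e₂) (Matrix.of fun (x : ↥X) (y : ↥(Xᶜ)) =>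
      if G.Adj x.1 y.1 then (1 : ZMod 2) else 0) := by
    ext x y
    simp only [Matrix.reindex_apply, Matrix.submatrix_apply, Matrix.of_apply]
    have hx : (e₁.symm x : V) = e.symm (x : W) := by
      apply hinj
      have h1 : ((e₁ (e₁.symm x)) : W) = e (e₁.symm x : V) := rfl
      rw [Equiv.apply_symm_apply] at h1
      rw [← h1]
      simp
    have hy : (e₂.symm y : V) = e.symm (y : W) := by
      apply hinj
      have h1 : ((e₂ (e₂.symm y)) : W) = e (e₂.symm y : V) := rfl
      rw [Equiv.apply_symm_apply] at h1
      rw [← h1]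
      simp
    rw [hx, hy]
    have : G'.Adj (x : W) (y : W) ↔ G.Adj (e.symm (x : W)) (e.symm (y : W)) := by
      rw [← e.map_adj_iff]
      simp
    by_cases had : G'.Adj (x : W) (y : W)
    · rw [if_pos had, if_pos (this.mp had)]
    · rw [if_neg had, if_neg (fun hh => had (this.mpr hh))]
  rw [cutRank, cutRank, this, rank_reindex_rect]

lemma cutRank_le_induce (G : SimpleGraph V) (s X : Set V)
    (hs : ∀ x ∈ s, ∀ y, G.Adj x y → y ∈ s)
    (hX : ∀ x ∈ X, x ∉ s → ∀ y, G.Adj x y → y ∈ X) :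
    cutRank G X ≤ cutRank (G.induce s) {a : s | (a : V) ∈ X} := by
  set X' : Set ↥s := {a : s | (a : V) ∈ X} with hX'
  set M : Matrix ↥X ↥(Xᶜ) (ZMod 2) :=
    Matrix.of (fun (x : ↥X) (y : ↥(Xᶜ)) => if G.Adj x.1 y.1 then (1 : ZMod 2) else 0) with hM
  set M' : Matrix ↥X' ↥(X'ᶜ) (ZMod 2) :=
    Matrix.of (fun (x : ↥X') (y : ↥(X'ᶜ)) =>
      if (G.induce s).Adj x.1 y.1 then (1 : ZMod 2) else 0) with hM'
  set P : Matrix ↥X ↥X' (ZMod 2) :=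
    Matrix.of (fun (x : ↥X) (x' : ↥X') => if (x'.1.1 : V) = x.1 then (1 : ZMod 2) else 0) with hP
  set Q : Matrix ↥(X'ᶜ) ↥(Xᶜ) (ZMod 2) :=
    Matrix.of (fun (y' : ↥(X'ᶜ)) (y : ↥(Xᶜ)) => if (y'.1.1 : V) = y.1 then (1 : ZMod 2) else 0)
      with hQ
  have key : M = P * M' * Q := by
    ext x y
    rw [Matrix.mul_apply]
    by_cases hxs : (x : V) ∈ s
    · by_cases hys : (y : V) ∈ s
      · -- both in s
        have hyX : (y : V) ∉ X := y.2
        set x₀ : ↥X' := ⟨⟨x.1, hxs⟩, x.2⟩ with hx₀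
        set y₀ : ↥(X'ᶜ) := ⟨⟨y.1, hys⟩, hyX⟩ with hy₀
        rw [Finset.sum_eq_single y₀]
        · rw [Matrix.mul_apply, Finset.sum_eq_single x₀]
          · have : Q y₀ y = 1 := by simp [hQ]; rfl
            rw [this, mul_one]
            have : P x x₀ = 1 := by simp [hP]; rfl
            rw [this, one_mul]
            simp only [hM, hM', Matrix.of_apply]
            rfl
          · intro x' _ hx'
            have : P x x' = 0 := by
              simp only [hP, Matrix.of_apply, ite_eq_right_iff]
              intro heq
              exact absurd (Subtype.ext (Subtype.ext heq) : x' = x₀) hx'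
            rw [this, zero_mul]
          · intro h; exact absurd (Finset.mem_univ _) h
        · intro y' _ hy'
          have : Q y' y = 0 := by
            simp only [hQ, Matrix.of_apply, ite_eq_right_iff]
            intro heq
            exact absurd (Subtype.ext (Subtype.ext heq) : y' = y₀) hy'
          rw [this, mul_zero]
        · intro h; exact absurd (Finset.mem_univ _) h
      · -- x ∈ s, y ∉ s : both sides zero
        have hMxy : M x y = 0 := by
          simp only [hM, Matrix.of_apply, ite_eq_right_iff]
          intro had
          exact absurd (hs _ hxs _ had) hys
        rw [hMxy]
        refine (Finset.sum_eq_zero ?_).symm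
        intro y' _
        have : Q y' y = 0 := by
          simp only [hQ, Matrix.of_apply, ite_eq_right_iff]
          intro heq
          exact absurd (heq ▸ y'.1.2) hys
        rw [this, mul_zero]
    · -- x ∉ s : both sides zero
      have hMxy : M x y = 0 := by
        simp only [hM, Matrix.of_apply, ite_eq_right_iff]
        intro had
        exact absurd (hX _ x.2 hxs _ had) y.2
      rw [hMxy]
      refine (Finset.sum_eq_zero ?_).symm
      intro y' _
      rw [Matrix.mul_apply]
      have : ∀ x' ∈ (Finset.univ : Finset ↥X'), P x x' * M' x' y' = 0 := by
        intro x' _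
        have : P x x' = 0 := by
          simp only [hP, Matrix.of_apply, ite_eq_right_iff]
          intro heq
          exact absurd (heq ▸ x'.1.2) hxs
        rw [this, zero_mul]
      rw [Finset.sum_eq_zero this, zero_mul]
  have : cutRank G X = M.rank := rfl
  rw [this, key]
  calc (P * M' * Q).rank ≤ (P * M').rank := Matrix.rank_mul_le_left _ _
    _ ≤ M'.rank := Matrix.rank_mul_le_right _ _

end CutRankLemmas



section Star

variable {α : Type*}

def starG (α : Type*) : SimpleGraph (Option α) where
  Adj x y := (x = none ∧ y ≠ none) ∨ (y = none ∧ x ≠ none)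
  symm := ⟨by intro x y h; tauto⟩
  loopless := ⟨by intro x h; rcases h with ⟨h1, h2⟩ | ⟨h1, h2⟩ <;> exact h2 h1⟩

lemma starG_adj_none {z : Option α} (h : (starG α).Adj none z) : z ≠ none := by
  rcases h with ⟨h1, h2⟩ | ⟨h1, h2⟩
  · exact h2
  · exact absurd rfl h2

lemma starG_adj_some {z z' : Option α} (hz : z ≠ none) (h : (starG α).Adj z z') : z' = none := by
  rcases h with ⟨h1, h2⟩ | ⟨h1, h2⟩
  · exact absurd h1 hz
  · exact h1

lemma starG_isTree : (starG α).IsTree := by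
  constructor
  · rw [SimpleGraph.connected_iff]
    refine ⟨?_, ⟨none⟩⟩
    intro x y
    have key : ∀ z : Option α, (starG α).Reachable z none := by
      intro z
      rcases Option.eq_none_or_eq_some z with rfl | ⟨a, rfl⟩
      · exact SimpleGraph.Reachable.refl _
      · exact (SimpleGraph.Adj.reachable (Or.inr ⟨rfl, by simp⟩))
    exact (key x).trans (key y).symm
  · intro v c hc
    have hmem : (none : Option α) ∈ c.support := by
      cases c with
      | nil => exact absurd rfl hc.ne_nil
      | cons h p =>
        rcases h with ⟨h1, h2⟩ | ⟨h1, h2⟩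
        · subst h1; exact SimpleGraph.Walk.start_mem_support _
        · subst h1
          exact List.mem_cons_of_mem _ (SimpleGraph.Walk.start_mem_support p)
    have hc' := hc.rotate hmem
    set c' := c.rotate none hmem with hcdef
    have hlen : 3 ≤ c'.length := hc'.three_le_length
    cases hw : c' with
    | nil => rw [hw] at hlen; simp at hlen
    | cons h₁ w =>
      rename_i z
      have hz : z ≠ none := starG_adj_none h₁
      obtain ⟨z₂, h₂, w₂, rfl⟩ := SimpleGraph.Walk.exists_eq_cons_of_ne hz w
      have hz₂ : z₂ = none := starG_adj_some hz h₂
      subst hz₂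
      cases hw₂ : w₂ with
      | nil =>
        rw [hw₂] at hw; rw [hw] at hlen
        simp [SimpleGraph.Walk.length_cons] at hlen
      | cons h₃ w₃ =>
        rename_i z₃
        have hnodup := hc'.support_nodup
        rw [hw, hw₂] at hnodup
        simp only [SimpleGraph.Walk.support_cons, List.tail_cons] at hnodup
        rw [List.nodup_cons] at hnodup
        have h4 := hnodup.2
        rw [List.nodup_cons] at h4
        exact h4.1 (SimpleGraph.Walk.end_mem_support w₃)

lemma starG_neighborSet_some (a : α) : (starG α).neighborSet (some a) = {none} := by
  ext y
  constructor
  · intro h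
    exact starG_adj_some (by simp) h
  · rintro rfl
    exact Or.inr ⟨rfl, by simp⟩

lemma starG_neighborSet_none : (starG α).neighborSet (none : Option α) = {x | x ≠ none} := by
  ext y
  constructor
  · intro h; exact starG_adj_none h
  · intro h; exact Or.inl ⟨rfl, h⟩

lemma starG_isLeaf_some (a : α) : IsLeaf (starG α) (some a) := by
  rw [IsLeaf, starG_neighborSet_some]
  exact Set.ncard_singleton _

noncomputable def optionNeNoneEquiv (α : Type*) : {x : Option α // x ≠ none} ≃ α := by
  refine (Equiv.ofBijective (fun a : α => (⟨some a, by simp⟩ : {x : Option α // x ≠ none})) ?_).symm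
  constructor
  · intro a b hab
    simpa using hab
  · rintro ⟨x, hx⟩
    rcases Option.eq_none_or_eq_some x with rfl | ⟨a, rfl⟩
    · exact absurd rfl hx
    · exact ⟨a, rfl⟩

lemma starG_not_isLeaf_none [Fintype α] (h : 2 ≤ Fintype.card α) :
    ¬ IsLeaf (starG α) (none : Option α) := by
  rw [IsLeaf, starG_neighborSet_none]
  have : ({x : Option α | x ≠ none}).ncard = Fintype.card α := by
    rw [← Nat.card_coe_set_eq]
    have e : ↥{x : Option α | x ≠ none} ≃ α := optionNeNoneEquiv α
    rw [Nat.card_congr e, Nat.card_eq_fintype_card]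
  omega

lemma starG_isLeaf_iff [Fintype α] (h : 2 ≤ Fintype.card α) (x : Option α) :
    IsLeaf (starG α) x ↔ x ≠ none := by
  constructor
  · intro hx
    rintro rfl
    exact starG_not_isLeaf_none h hx
  · intro hx
    rcases Option.eq_none_or_eq_some x with rfl | ⟨a, rfl⟩
    · exact absurd rfl hx
    · exact starG_isLeaf_some a

end Star

section Existence

variable {W : Type*} [Fintype W]

lemma set_card_le {X : Set W} : Fintype.card X ≤ Fintype.card W := by
  classical
  exact Fintype.card_le_of_injective _ Subtype.val_injective

lemma hasRankDecomp_star (H : SimpleGraph W) (h2 : 2 ≤ Fintype.card W) :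
    HasRankDecomp H (Fintype.card W) (Fintype.card W) := by
  set n := Fintype.card W with hn
  have hn2 : 2 ≤ Fintype.card (Fin n) := by simpa using h2
  refine ⟨Option (Fin n), inferInstance, starG (Fin n), starG_isTree, ?_⟩
  have eσ : W ≃ {x : Option (Fin n) // IsLeaf (starG (Fin n)) x} := by
    refine (Fintype.equivFin W).trans (((optionNeNoneEquiv (Fin n)).symm).trans
      (Equiv.subtypeEquivRight ?_))
    intro x
    exact (starG_isLeaf_iff hn2 x).symm
  refine ⟨eσ, ?_, ?_⟩
  · intro v _ X _
    exact le_trans (cutRank_le_card_left H X) set_card_le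
  · refine ⟨none, ?_⟩
    intro y
    rcases Option.eq_none_or_eq_some y with rfl | ⟨a, rfl⟩
    · simp [SimpleGraph.dist_self]
    · have : (starG (Fin n)).dist none (some a) = 1 := by
        rw [SimpleGraph.dist_eq_one_iff_adj]
        exact Or.inl ⟨rfl, by simp⟩
      omega

lemma rankDepth_mem (H : SimpleGraph W) (h2 : 2 ≤ Fintype.card W) :
    HasRankDecomp H (rankDepth H) (rankDepth H) := by
  rw [rankDepth, if_neg (by omega)]
  have h := Nat.sInf_mem (s := {k | HasRankDecomp H k k})
    ⟨Fintype.card W, by exact hasRankDecomp_star H h2⟩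
  exact h

lemma hasRankDecomp_mono {H : SimpleGraph W} {k r k' r' : ℕ} (h : HasRankDecomp H k r)
    (hk : k ≤ k') (hr : r ≤ r') : HasRankDecomp H k' r' := by
  obtain ⟨t, ft, T, hT, σ, hw, c, hc⟩ := h
  exact ⟨t, ft, T, hT, σ, fun v hv X hX => le_trans (hw v hv X hX) hk,
    c, fun y => le_trans (hc y) hr⟩

lemma one_le_rankDepth (H : SimpleGraph W) (h2 : 2 ≤ Fintype.card W) :
    1 ≤ rankDepth H := by
  rw [rankDepth, if_neg (by omega)]
  rcases Nat.eq_zero_or_pos (sInf {k | HasRankDecomp H k k}) with h0 | h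
  · exfalso
    rcases Nat.sInf_eq_zero.mp h0 with h0 | hempty
    · obtain ⟨t, ft, T, hT, σ, _, c, hc⟩ := h0
      have hall : ∀ y : t, y = c := by
        intro y
        have h1 : T.dist c y = 0 := Nat.le_zero.mp (hc y)
        exact ((hT.isConnected.preconnected c y).dist_eq_zero_iff.mp h1).symm
      obtain ⟨w, hw⟩ : ∃ w : W, True := by
        have : Nonempty W := Fintype.card_pos_iff.mp (by omega)
        exact ⟨Classical.arbitrary W, trivial⟩
      have hleaf := (σ w).2
      rw [IsLeaf] at hleaf
      have hne : (T.neighborSet (σ w).1).Nonempty := by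
        apply Set.nonempty_of_ncard_ne_zero
        omega
      obtain ⟨y, hy⟩ := hne
      have h1 : y = c := hall y
      have h2 : (σ w).1 = c := hall _
      have := T.ne_of_adj hy
      rw [h1, h2] at this
      exact this rfl
    · have hSne : {k | HasRankDecomp H k k}.Nonempty :=
        ⟨Fintype.card W, by exact hasRankDecomp_star H h2⟩
      exact absurd hempty (Set.nonempty_iff_ne_empty.mp hSne)
  · exact h

lemma rankDepth_le (H : SimpleGraph W) {k : ℕ} (hk : HasRankDecomp H k k) :
    rankDepth H ≤ k := by
  rw [rankDepth]
  split
  · omega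
  · exact Nat.sInf_le hk

end Existence

section IsoTransport

variable {V W : Type*} [Fintype V] [Fintype W]

lemma hasRankDecomp_of_iso {G : SimpleGraph V} {G' : SimpleGraph W} (e : G ≃g G') {k r : ℕ}
    (h : HasRankDecomp G k r) : HasRankDecomp G' k r := by
  obtain ⟨t, ft, T, hT, σ, hw, c, hc⟩ := h
  refine ⟨t, ft, T, hT, e.toEquiv.symm.trans σ, ?_, c, hc⟩
  intro v hv X' hX'
  set X : Set V := ⇑e ⁻¹' X' with hXdef
  have hXw : cutRank G X ≤ k := by
    apply hw v hv
    intro u u' hr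
    have key : ∀ w : V, (e.toEquiv.symm.trans σ) (e w) = σ w := by
      intro w
      simp only [Equiv.trans_apply]
      congr 1
      exact e.toEquiv.symm_apply_apply w
    have h5 := hX' (e u) (e u')
    rw [key u, key u'] at h5
    exact h5 hr
  have himg : ⇑e '' X = X' := by
    rw [hXdef]
    exact Set.image_preimage_eq X' e.toEquiv.surjective
  calc cutRank G' X' = cutRank G' (⇑e '' X) := by rw [himg]
    _ = cutRank G X := cutRank_map e X
    _ ≤ k := hXw

lemma rankDepth_iso {G : SimpleGraph V} {G' : SimpleGraph W} (e : G ≃g G') :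
    rankDepth G = rankDepth G' := by
  have hcard : Fintype.card V = Fintype.card W := Fintype.card_congr e.toEquiv
  rw [rankDepth, rankDepth, hcard]
  split
  · rfl
  · congr 1
    ext k
    exact ⟨fun h => hasRankDecomp_of_iso e h, fun h => hasRankDecomp_of_iso e.symm h⟩

end IsoTransport

section Glue

variable {ι : Type} (t : ι → Type) (T : ∀ i, SimpleGraph (t i)) (c : ∀ i, t i)

def glue : SimpleGraph (Option (Σ i, t i)) where
  Adj x y :=
    (∃ (i : ι) (a b : t i), x = some ⟨i, a⟩ ∧ y = some ⟨i, b⟩ ∧ (T i).Adj a b) ∨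
    (∃ i, x = none ∧ y = some ⟨i, c i⟩) ∨
    (∃ i, x = some ⟨i, c i⟩ ∧ y = none)
  symm := ⟨by
    rintro x y (⟨i, a, b, h1, h2, h3⟩ | ⟨i, h1, h2⟩ | ⟨i, h1, h2⟩)
    · exact Or.inl ⟨i, b, a, h2, h1, h3.symm⟩
    · exact Or.inr (Or.inr ⟨i, h2, h1⟩)
    · exact Or.inr (Or.inl ⟨i, h2, h1⟩)⟩
  loopless := ⟨by
    rintro x (⟨i, a, b, h1, h2, h3⟩ | ⟨i, h1, h2⟩ | ⟨i, h1, h2⟩)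
    · subst h1
      rw [Option.some.injEq, Sigma.mk.inj_iff] at h2
      have hab : a = b := eq_of_heq h2.2
      subst hab
      exact (T i).irrefl h3
    · subst h1; simp at h2
    · rw [h1] at h2; simp at h2⟩

lemma glue_adj_none_elim {y : Option (Σ i, t i)} (h : (glue t T c).Adj none y) :
    ∃ i, y = some ⟨i, c i⟩ := by
  rcases h with ⟨i, a, b, h1, h2, h3⟩ | ⟨i, h1, h2⟩ | ⟨i, h1, h2⟩
  · simp at h1
  · exact ⟨i, h2⟩
  · simp at h1

lemma glue_adj_some_elim {i : ι} {a : t i} {y : Option (Σ i, t i)}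
    (h : (glue t T c).Adj (some ⟨i, a⟩) y) :
    (y = none ∧ a = c i) ∨ ∃ b, y = some ⟨i, b⟩ ∧ (T i).Adj a b := by
  rcases h with ⟨j, a', b', h1, h2, h3⟩ | ⟨j, h1, h2⟩ | ⟨j, h1, h2⟩
  · rw [Option.some.injEq, Sigma.mk.inj_iff] at h1
    obtain ⟨rfl, hh⟩ := h1
    rw [heq_eq_eq] at hh
    subst hh
    exact Or.inr ⟨b', h2, h3⟩
  · simp at h1
  · rw [Option.some.injEq, Sigma.mk.inj_iff] at h1
    obtain ⟨rfl, hh⟩ := h1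
    rw [heq_eq_eq] at hh
    subst hh
    exact Or.inl ⟨h2, rfl⟩

def glueHom (i : ι) : T i →g glue t T c where
  toFun a := some ⟨i, a⟩
  map_rel' := fun {a b} h => Or.inl ⟨i, a, b, rfl, rfl, h⟩

lemma glueHom_injective (i : ι) : Function.Injective (glueHom t T c i) := by
  intro a b hab
  have h' : (some ⟨i, a⟩ : Option (Σ j, t j)) = some ⟨i, b⟩ := hab
  rw [Option.some.injEq, Sigma.mk.inj_iff] at h'
  exact eq_of_heq h'.2

lemma glue_adj_fst {x y : Option (Σ i, t i)} (h : (glue t T c).Adj x y)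
    (hx : x ≠ none) (hy : y ≠ none) : x.map Sigma.fst = y.map Sigma.fst := by
  rcases h with ⟨i, a, b, h1, h2, h3⟩ | ⟨i, h1, h2⟩ | ⟨i, h1, h2⟩
  · rw [h1, h2]; rfl
  · exact absurd h1 hx
  · exact absurd h2 hy

lemma glue_walk_fst : ∀ {x y : Option (Σ i, t i)} (w : (glue t T c).Walk x y),
    none ∉ w.support → x.map Sigma.fst = y.map Sigma.fst := by
  intro x y w
  induction w with
  | nil => intro _; rfl
  | cons h p ih =>
    intro hsup
    rw [SimpleGraph.Walk.support_cons] at hsup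
    have h1 : none ∉ p.support := fun hh => hsup (List.mem_cons_of_mem _ hh)
    have hx : _ ≠ none := fun hh => hsup (hh ▸ List.mem_cons_self)
    have hz : _ ≠ none := fun hh => h1 (hh ▸ p.start_mem_support)
    exact (glue_adj_fst t T c h hx hz).trans (ih h1)

lemma glue_walk_proj (i : ι) : ∀ {x y : Option (Σ i, t i)} (w : (glue t T c).Walk x y)
    (hw : none ∉ w.support) (a b : t i) (hx : x = some ⟨i, a⟩) (hy : y = some ⟨i, b⟩),
    ∃ w' : (T i).Walk a b, w'.map (glueHom t T c i) = w.copy hx hy := by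
  intro x y w
  induction w with
  | nil =>
    intro _ a b hx hy
    subst hx
    have hab : a = b := by
      have h' := hy
      rw [Option.some.injEq, Sigma.mk.inj_iff] at h'
      exact eq_of_heq h'.2
    subst hab
    exact ⟨SimpleGraph.Walk.nil, rfl⟩
  | cons h p ih =>
    intro hsup a b hx hy
    subst hx
    rw [SimpleGraph.Walk.support_cons] at hsup
    have h1 : none ∉ p.support := fun hh => hsup (List.mem_cons_of_mem _ hh)
    have hz : _ ≠ none := fun hh => h1 (hh ▸ p.start_mem_support)
    rcases glue_adj_some_elim t T c h with ⟨hn, _⟩ | ⟨b', hz', hadj⟩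
    · exact absurd hn hz
    · subst hz'
      obtain ⟨w', hmap⟩ := ih h1 b' b rfl hy
      refine ⟨SimpleGraph.Walk.cons hadj w', ?_⟩
      rw [SimpleGraph.Walk.map_cons, SimpleGraph.Walk.copy_cons]
      exact congrArg (SimpleGraph.Walk.cons _) hmap

lemma glue_connected [Nonempty ι] (hT : ∀ i, (T i).IsTree) : (glue t T c).Connected := by
  rw [SimpleGraph.connected_iff]
  refine ⟨?_, ⟨none⟩⟩
  intro x y
  have key : ∀ z : Option (Σ i, t i), (glue t T c).Reachable z none := by
    rintro (_ | ⟨i, a⟩)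
    · exact SimpleGraph.Reachable.refl _
    · have hreach : (T i).Reachable a (c i) := (hT i).isConnected.preconnected a (c i)
      have h2 : (glue t T c).Reachable (some ⟨i, a⟩) (some ⟨i, c i⟩) :=
        hreach.map (glueHom t T c i)
      exact h2.trans (SimpleGraph.Adj.reachable (Or.inr (Or.inr ⟨i, rfl, rfl⟩)))
  exact (key x).trans (key y).symm

lemma glue_isAcyclic (hT : ∀ i, (T i).IsTree) : (glue t T c).IsAcyclic := by
  intro v cyc hcyc
  by_cases hmem : (none : Option (Σ i, t i)) ∈ cyc.support
  · have hc' := hcyc.rotate hmem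
    cases hw : cyc.rotate none hmem with
    | nil => rw [hw] at hc'; exact hc'.ne_nil rfl
    | cons h₁ w =>
      rename_i z
      rw [hw] at hc'
      obtain ⟨i, rfl⟩ := glue_adj_none_elim t T c h₁
      obtain ⟨z', h₂', w₄, hwrev⟩ :=
        SimpleGraph.Walk.exists_eq_cons_of_ne (by simp) w.reverse
      obtain ⟨j, rfl⟩ := glue_adj_none_elim t T c h₂'
      have hnodup : w.support.Nodup := by
        have h5 := hc'.support_nodup
        rw [SimpleGraph.Walk.support_cons] at h5
        simpa using h5
      have hw4support : none ∉ w₄.support := by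
        have h6 : w.reverse.support = none :: w₄.support := by
          rw [hwrev, SimpleGraph.Walk.support_cons]
        rw [SimpleGraph.Walk.support_reverse] at h6
        have h7 : w.support.reverse.Nodup := List.nodup_reverse.mpr hnodup
        rw [h6] at h7
        exact (List.nodup_cons.mp h7).1
      have hfst := glue_walk_fst t T c w₄ hw4support
      simp only [Option.map_some] at hfst
      have hij : j = i := by simpa using hfst
      subst hij
      have hedges : ((SimpleGraph.Walk.cons h₁ w).edges).Nodup := by
        rw [SimpleGraph.Walk.isCycle_def] at hc'
        rw [SimpleGraph.Walk.isTrail_def] at hc'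
        exact hc'.1
      rw [SimpleGraph.Walk.edges_cons] at hedges
      have hmem2 : s((none : Option (Σ i, t i)), some ⟨j, c j⟩) ∈ w.edges := by
        have h8 : w.reverse.edges = s((none : Option (Σ i, t i)), some ⟨j, c j⟩) :: w₄.edges := by
          rw [hwrev, SimpleGraph.Walk.edges_cons]
        have h9 : s((none : Option (Σ i, t i)), some ⟨j, c j⟩) ∈ w.reverse.edges := by
          rw [h8]; exact List.mem_cons_self
        rw [SimpleGraph.Walk.edges_reverse] at h9
        exact List.mem_reverse.mp h9
      exact (List.nodup_cons.mp hedges).1 hmem2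
  · have hv : v ≠ none := fun h => hmem (h ▸ cyc.start_mem_support)
    obtain ⟨⟨i, a⟩, rfl⟩ : ∃ p, v = some p := Option.ne_none_iff_exists'.mp hv
    obtain ⟨w', hmap⟩ := glue_walk_proj t T c i cyc hmem a a rfl rfl
    rw [SimpleGraph.Walk.copy_rfl_rfl] at hmap
    have hcyc' : (w'.map (glueHom t T c i)).IsCycle := by rw [hmap]; exact hcyc
    have hwcyc : w'.IsCycle :=
      (SimpleGraph.Walk.map_isCycle_iff_of_injective (glueHom_injective t T c i)).mp hcyc'
    exact (hT i).IsAcyclic w' hwcyc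

lemma glue_isTree [Nonempty ι] (hT : ∀ i, (T i).IsTree) : (glue t T c).IsTree :=
  ⟨glue_connected t T c hT, glue_isAcyclic t T c hT⟩

end Glue

section Glue2

variable {ι : Type} (t : ι → Type) (T : ∀ i, SimpleGraph (t i)) (c : ∀ i, t i)

def glueLeafP (i : ι) (a : t i) : Prop :=
  (a ≠ c i ∧ IsLeaf (T i) a) ∨ (a = c i ∧ (T i).neighborSet (c i) = ∅)

lemma glue_neighborSet_some (i : ι) (a : t i) :
    (glue t T c).neighborSet (some ⟨i, a⟩) =
      (fun b => (some ⟨i, b⟩ : Option (Σ j, t j))) '' (T i).neighborSet a ∪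
        (if a = c i then {none} else ∅) := by
  ext y
  constructor
  · intro h
    rcases glue_adj_some_elim t T c h with ⟨rfl, hac⟩ | ⟨b, rfl, hadj⟩
    · right; rw [if_pos hac]; rfl
    · left; exact ⟨b, hadj, rfl⟩
  · intro h
    rcases h with ⟨b, hb, rfl⟩ | h
    · exact Or.inl ⟨i, a, b, rfl, rfl, hb⟩
    · by_cases hac : a = c i
      · rw [if_pos hac] at h
        have hy : y = none := h
        subst hy
        subst hac
        exact Or.inr (Or.inr ⟨i, rfl, rfl⟩)
      · rw [if_neg hac] at h
        exact absurd h (Set.notMem_empty y)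

lemma glue_someInj (i : ι) : Function.Injective (fun b => (some ⟨i, b⟩ : Option (Σ j, t j))) := by
  intro a b hab
  simp only [Option.some.injEq, Sigma.mk.inj_iff] at hab
  exact eq_of_heq hab.2

lemma glue_isLeaf_some_iff [∀ i, Fintype (t i)] (i : ι) (a : t i) :
    IsLeaf (glue t T c) (some ⟨i, a⟩) ↔ glueLeafP t T c i a := by
  rw [IsLeaf, glue_neighborSet_some]
  by_cases hac : a = c i
  · rw [if_pos hac]
    have hdisj : Disjoint ((fun b => (some ⟨i, b⟩ : Option (Σ j, t j))) '' (T i).neighborSet a)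
        ({none} : Set (Option (Σ j, t j))) := by
      rw [Set.disjoint_singleton_right]
      rintro ⟨b, _, h⟩
      simp at h
    rw [Set.ncard_union_eq hdisj (Set.toFinite _) (Set.toFinite _),
      Set.ncard_image_of_injective _ (glue_someInj t i), Set.ncard_singleton]
    constructor
    · intro h
      have h0 : ((T i).neighborSet a).ncard = 0 := by omega
      refine Or.inr ⟨hac, ?_⟩
      rw [← hac]
      exact (Set.ncard_eq_zero (Set.toFinite _)).mp h0
    · rintro (⟨hne, _⟩ | ⟨_, hempty⟩)
      · exact absurd hac hne
      · rw [hac, hempty, Set.ncard_empty]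
  · rw [if_neg hac, Set.union_empty,
      Set.ncard_image_of_injective _ (glue_someInj t i)]
    constructor
    · intro h; exact Or.inl ⟨hac, h⟩
    · rintro (⟨_, h⟩ | ⟨h, _⟩)
      · exact h
      · exact absurd h hac

lemma glue_neighborSet_none :
    (glue t T c).neighborSet none = {x : Option (Σ i, t i) | ∃ i, x = some ⟨i, c i⟩} := by
  ext y
  constructor
  · intro h; exact glue_adj_none_elim t T c h
  · rintro ⟨i, rfl⟩; exact Or.inr (Or.inl ⟨i, rfl, rfl⟩)

lemma glue_not_isLeaf_none [Fintype ι] (h2 : 2 ≤ Fintype.card ι) :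
    ¬ IsLeaf (glue t T c) none := by
  rw [IsLeaf, glue_neighborSet_none]
  have e : ι ≃ ↥{x : Option (Σ i, t i) | ∃ i, x = some ⟨i, c i⟩} := by
    refine Equiv.ofBijective (fun i => ⟨some ⟨i, c i⟩, ⟨i, rfl⟩⟩) ⟨?_, ?_⟩
    · intro i j hij
      simp only [Subtype.mk.injEq, Option.some.injEq, Sigma.mk.inj_iff] at hij
      exact hij.1
    · rintro ⟨x, i, rfl⟩
      exact ⟨i, rfl⟩
  have : ({x : Option (Σ i, t i) | ∃ i, x = some ⟨i, c i⟩}).ncard = Fintype.card ι := by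
    rw [← Nat.card_coe_set_eq, ← Nat.card_congr e, Nat.card_eq_fintype_card]
  omega

noncomputable def glueLeafEquiv [Fintype ι] [∀ i, Fintype (t i)] (h2 : 2 ≤ Fintype.card ι) :
    (Σ i, {a : t i // glueLeafP t T c i a}) ≃
      {x : Option (Σ i, t i) // IsLeaf (glue t T c) x} := by
  refine Equiv.ofBijective
    (fun p => ⟨some ⟨p.1, p.2.1⟩, (glue_isLeaf_some_iff t T c p.1 p.2.1).mpr p.2.2⟩) ⟨?_, ?_⟩
  · rintro ⟨i, a, ha⟩ ⟨j, b, hb⟩ hab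
    simp only [Subtype.mk.injEq, Option.some.injEq, Sigma.mk.inj_iff] at hab
    obtain ⟨rfl, hab2⟩ := hab
    rw [heq_eq_eq] at hab2
    subst hab2
    rfl
  · rintro ⟨x, hx⟩
    have hxn : x ≠ none := by
      rintro rfl
      exact glue_not_isLeaf_none t T c h2 hx
    obtain ⟨⟨i, a⟩, rfl⟩ : ∃ p, x = some p := Option.ne_none_iff_exists'.mp hxn
    exact ⟨⟨i, a, (glue_isLeaf_some_iff t T c i a).mp hx⟩, rfl⟩

lemma glue_dist_le (hT : ∀ i, (T i).IsTree) (i : ι) (b : t i) :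
    (glue t T c).dist none (some ⟨i, b⟩) ≤ (T i).dist (c i) b + 1 := by
  obtain ⟨p, hp⟩ := (hT i).isConnected.exists_walk_length_eq_dist (c i) b
  have hadj : (glue t T c).Adj none (some ⟨i, c i⟩) := Or.inr (Or.inl ⟨i, rfl, rfl⟩)
  calc (glue t T c).dist none (some ⟨i, b⟩)
      ≤ (SimpleGraph.Walk.cons hadj (p.map (glueHom t T c i))).length := SimpleGraph.dist_le _
    _ = (T i).dist (c i) b + 1 := by
        show (p.map (glueHom t T c i)).length + 1 = _
        rw [SimpleGraph.Walk.length_map, hp]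

def glueAvoidNoneHom (i : ι) : T i →g avoid (glue t T c) none where
  toFun a := some ⟨i, a⟩
  map_rel' := fun {a b} h =>
    (⟨Or.inl ⟨i, a, b, rfl, rfl, h⟩, Option.some_ne_none _, Option.some_ne_none _⟩ : _ ∧ _ ∧ _)

def glueAvoidSomeHom (i : ι) (v : t i) :
    avoid (T i) v →g avoid (glue t T c) (some ⟨i, v⟩) where
  toFun a := some ⟨i, a⟩
  map_rel' := by
    intro a b hab
    obtain ⟨h, ha, hb⟩ : (T i).Adj a b ∧ a ≠ v ∧ b ≠ v := hab
    refine ⟨Or.inl ⟨i, a, b, rfl, rfl, h⟩, ?_, ?_⟩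
    · intro hh
      exact ha (glue_someInj t i hh)
    · intro hh
      exact hb (glue_someInj t i hh)

def glueAvoidOtherHom {i j : ι} (v : t i) (hij : j ≠ i) :
    T j →g avoid (glue t T c) (some ⟨i, v⟩) where
  toFun a := some ⟨j, a⟩
  map_rel' := by
    intro a b h
    show (glue t T c).Adj (some ⟨j, a⟩) (some ⟨j, b⟩) ∧ _ ∧ _
    refine ⟨Or.inl ⟨j, a, b, rfl, rfl, h⟩, ?_, ?_⟩ <;>
    · intro hh
      rw [Option.some.injEq, Sigma.mk.inj_iff] at hh
      exact hij hh.1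

end Glue2

section GlueMain

theorem hasRankDecomp_glue {V : Type*} [Fintype V] (G : SimpleGraph V)
    {ι : Type} [Fintype ι] (h2 : 2 ≤ Fintype.card ι)
    (s : ι → Set V)
    (hcover : ∀ v : V, ∃! i, v ∈ s i)
    (hclosed : ∀ i, ∀ x ∈ s i, ∀ y, G.Adj x y → y ∈ s i)
    (t : ι → Type) [∀ i, Fintype (t i)]
    (T : ∀ i, SimpleGraph (t i)) (c : ∀ i, t i)
    (htree : ∀ i, (T i).IsTree)
    (σi : ∀ i, ↥(s i) ≃ {a : t i // glueLeafP t T c i a})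
    (k r : ℕ)
    (hwidth : ∀ i, ∀ a : t i, ¬ IsLeaf (T i) a →
      ∀ X₀ : Set ↥(s i), (∀ u u' : ↥(s i),
        (avoid (T i) a).Reachable ((σi i u) : t i) ((σi i u') : t i) → (u ∈ X₀ ↔ u' ∈ X₀)) →
      cutRank (G.induce (s i)) X₀ ≤ k)
    (hcleaf : ∀ i, (T i).neighborSet (c i) = ∅ ∨ ¬ IsLeaf (T i) (c i))
    (hrad : ∀ i, ∀ b : t i, (T i).dist (c i) b ≤ r) :
    HasRankDecomp G k (r + 1) := by
  have : Nonempty ι := Fintype.card_pos_iff.mp (by omega)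
  refine ⟨Option (Σ i, t i), inferInstance, glue t T c, glue_isTree t T c htree, ?_⟩
  set F : (Σ i, ↥(s i)) → V := fun p => p.2.1 with hF
  have hFbij : Function.Bijective F := by
    constructor
    · rintro ⟨i, u⟩ ⟨j, w⟩ huw
      have hval : (u : V) = (w : V) := huw
      have hij : i = j := by
        obtain ⟨i₀, _, huniq⟩ := hcover (u : V)
        have h1 := huniq i u.2
        have h2 := huniq j (hval ▸ w.2)
        exact h1.trans h2.symm
      subst hij
      have : u = w := Subtype.ext hval
      subst this
      rfl
    · intro v
      obtain ⟨i, hi, -⟩ := hcover v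
      exact ⟨⟨i, ⟨v, hi⟩⟩, rfl⟩
  set E : V ≃ Σ i, ↥(s i) := (Equiv.ofBijective F hFbij).symm with hE
  have hEval : ∀ (v : V) (i : ι) (hv : v ∈ s i), E v = ⟨i, ⟨v, hv⟩⟩ := by
    intro v i hv
    rw [hE, Equiv.symm_apply_eq]
    rfl
  set σ : V ≃ {x : Option (Σ i, t i) // IsLeaf (glue t T c) x} :=
    E.trans ((Equiv.sigmaCongrRight (fun i => σi i)).trans (glueLeafEquiv t T c h2)) with hσdef
  have hσ : ∀ (v : V) (i : ι) (hv : v ∈ s i),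
      (σ v).1 = some ⟨i, (σi i ⟨v, hv⟩).1⟩ := by
    intro v i hv
    rw [hσdef]
    simp only [Equiv.trans_apply]
    rw [hEval v i hv]
    rfl
  refine ⟨σ, ?_, ?_⟩
  · rintro (_ | ⟨i, a⟩) hv X hX
    · -- root node: X is a union of parts, cut rank zero
      have hz : cutRank G X = 0 := by
        apply cutRank_eq_zero
        intro x hx y hadj
        obtain ⟨i, hxi, -⟩ := hcover x
        have hyi : y ∈ s i := hclosed i x hxi y hadj
        have hreach : (avoid (glue t T c) none).Reachable (σ x).1 (σ y).1 := by
          rw [hσ x i hxi, hσ y i hyi]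
          have hr : (T i).Reachable ((σi i ⟨x, hxi⟩) : t i) ((σi i ⟨y, hyi⟩) : t i) :=
            (htree i).isConnected.preconnected _ _
          exact hr.map (glueAvoidNoneHom t T c i)
        exact (hX x y hreach).mp hx
      omega
    · -- internal node of a piece
      have hnl : ¬ glueLeafP t T c i a := fun hp =>
        hv ((glue_isLeaf_some_iff t T c i a).mpr hp)
      have ha : ¬ IsLeaf (T i) a := by
        intro hleaf
        have hac : a = c i := by
          by_contra hne
          exact hnl (Or.inl ⟨hne, hleaf⟩)
        rcases hcleaf i with hemp | hnleaf
        · exact hnl (Or.inr ⟨hac, hemp⟩)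
        · rw [hac] at hleaf
          exact hnleaf hleaf
      set X₀ : Set ↥(s i) := {u : ↥(s i) | (u : V) ∈ X} with hX₀
      have hinv : ∀ u u' : ↥(s i),
          (avoid (T i) a).Reachable ((σi i u) : t i) ((σi i u') : t i) → (u ∈ X₀ ↔ u' ∈ X₀) := by
        intro u u' hr
        have hreach : (avoid (glue t T c) (some ⟨i, a⟩)).Reachable (σ (u : V)).1 (σ (u' : V)).1 := by
          rw [hσ (u : V) i u.2, hσ (u' : V) i u'.2]
          have := hr.map (glueAvoidSomeHom t T c i a)
          simpa [glueAvoidSomeHom] using this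
        exact hX (u : V) (u' : V) hreach
      have hw := hwidth i a ha X₀ hinv
      have htrans := cutRank_le_induce G (s i) X (hclosed i) ?_
      · calc cutRank G X ≤ cutRank (G.induce (s i)) {u : ↥(s i) | (u : V) ∈ X} := htrans
          _ ≤ k := hw
      · intro x hx hxs y hadj
        obtain ⟨j, hxj, -⟩ := hcover x
        have hij : j ≠ i := fun h => hxs (h ▸ hxj)
        have hyj : y ∈ s j := hclosed j x hxj y hadj
        have hreach : (avoid (glue t T c) (some ⟨i, a⟩)).Reachable (σ x).1 (σ y).1 := by
          rw [hσ x j hxj, hσ y j hyj]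
          have hr : (T j).Reachable ((σi j ⟨x, hxj⟩) : t j) ((σi j ⟨y, hyj⟩) : t j) :=
            (htree j).isConnected.preconnected _ _
          exact hr.map (glueAvoidOtherHom t T c a hij)
        exact (hX x y hreach).mp hx
  · refine ⟨none, ?_⟩
    rintro (_ | ⟨i, b⟩)
    · simp [SimpleGraph.dist_self]
    · have h1 := glue_dist_le t T c htree i b
      have h2 := hrad i b
      omega

end GlueMain

section Pieces

def pieceLeafP {τ : Type*} (T : SimpleGraph τ) (c : τ) (a : τ) : Prop :=
  (a ≠ c ∧ IsLeaf T a) ∨ (a = c ∧ T.neighborSet c = ∅)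

lemma glueLeafP_eq_pieceLeafP {ι : Type} (t : ι → Type) (T : ∀ i, SimpleGraph (t i))
    (c : ∀ i, t i) (i : ι) (a : t i) :
    glueLeafP t T c i a ↔ pieceLeafP (T i) (c i) a := Iff.rfl

lemma neighborSet_nonempty {τ : Type*} [Fintype τ] {T : SimpleGraph τ}
    (hconn : T.Connected) (h2 : 2 ≤ Fintype.card τ) (x : τ) :
    (T.neighborSet x).Nonempty := by
  obtain ⟨y, hy⟩ := Fintype.exists_ne_of_one_lt_card (by omega) x
  obtain ⟨w⟩ := hconn.preconnected x y
  obtain ⟨z, hz, p', rfl⟩ := SimpleGraph.Walk.exists_eq_cons_of_ne (Ne.symm hy) w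
  exact ⟨z, hz⟩

lemma recenter {τ : Type*} [Fintype τ] {T : SimpleGraph τ} (hT : T.IsTree)
    (h3 : 3 ≤ Fintype.card τ) {c₀ : τ} {r : ℕ} (hr : ∀ y, T.dist c₀ y ≤ r) :
    ∃ c₁ : τ, ¬ IsLeaf T c₁ ∧ ∀ y, T.dist c₁ y ≤ r := by
  by_cases hc₀ : IsLeaf T c₀
  · -- c₀ is a leaf; move to its unique neighbor
    obtain ⟨n₀, hn₀⟩ := (Set.ncard_eq_one (s := T.neighborSet c₀)).mp hc₀
    have hadj : T.Adj c₀ n₀ := by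
      have : n₀ ∈ T.neighborSet c₀ := by rw [hn₀]; rfl
      exact this
    have hr1 : 1 ≤ r := by
      obtain ⟨y, hy⟩ := Fintype.exists_ne_of_one_lt_card (by omega) c₀
      have := hT.isConnected.pos_dist_of_ne (Ne.symm hy)
      have := hr y
      omega
    refine ⟨n₀, ?_, ?_⟩
    · -- n₀ is not a leaf
      intro hleaf
      obtain ⟨b, hb⟩ := (Set.ncard_eq_one (s := T.neighborSet n₀)).mp hleaf
      have hc₀b : c₀ = b := by
        have : c₀ ∈ T.neighborSet n₀ := hadj.symm
        rw [hb] at this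
        exact this
      subst hc₀b
      -- neighborsets: nbr c₀ = {n₀}, nbr n₀ = {c₀}
      obtain ⟨z, hz⟩ : ∃ z : τ, z ≠ c₀ ∧ z ≠ n₀ := by
        have hcard : (Finset.univ \ {c₀, n₀} : Finset τ).Nonempty := by
          apply Finset.card_pos.mp
          have h1 : ({c₀, n₀} : Finset τ).card ≤ 2 := Finset.card_insert_le _ _ |>.trans (by simp)
          have h2 := Finset.card_sdiff_add_card_eq_card
            (Finset.subset_univ ({c₀, n₀} : Finset τ))
          have h4 : (Finset.univ : Finset τ).card = Fintype.card τ := rfl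
          omega
        obtain ⟨z, hz⟩ := hcard
        simp only [Finset.mem_sdiff, Finset.mem_univ, Finset.mem_insert,
          Finset.mem_singleton, true_and] at hz
        exact ⟨z, fun h => hz (Or.inl h), fun h => hz (Or.inr h)⟩
      obtain ⟨p, hplen⟩ := hT.isConnected.exists_walk_length_eq_dist c₀ z
      have hpath : p.IsPath := p.isPath_of_length_eq_dist hplen
      obtain ⟨z₁, h₁, p₁, rfl⟩ := SimpleGraph.Walk.exists_eq_cons_of_ne (Ne.symm hz.1) p
      have hz₁ : z₁ = n₀ := by
        have : z₁ ∈ T.neighborSet c₀ := h₁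
        rw [hn₀] at this
        exact this
      have hz1z : z₁ ≠ z := by rw [hz₁]; exact Ne.symm hz.2
      obtain ⟨z₂, h₂, p₂, rfl⟩ := SimpleGraph.Walk.exists_eq_cons_of_ne hz1z p₁
      have hz₂ : z₂ = c₀ := by
        have : z₂ ∈ T.neighborSet n₀ := hz₁ ▸ h₂
        rw [hb] at this
        exact this
      subst hz₂
      have hnodup := hpath.support_nodup
      rw [SimpleGraph.Walk.support_cons, SimpleGraph.Walk.support_cons] at hnodup
      rw [List.nodup_cons] at hnodup
      exact hnodup.1 (List.mem_cons_of_mem _ p₂.start_mem_support)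
    · intro y
      by_cases hy : y = c₀
      · subst hy
        have : T.dist n₀ y = 1 := by
          rw [SimpleGraph.dist_comm, SimpleGraph.dist_eq_one_iff_adj]
          exact hadj
        omega
      · obtain ⟨p, hplen⟩ := hT.isConnected.exists_walk_length_eq_dist c₀ y
        obtain ⟨z₁, h₁, p₁, rfl⟩ := SimpleGraph.Walk.exists_eq_cons_of_ne (Ne.symm hy) p
        have hz₁ : z₁ = n₀ := by
          have : z₁ ∈ T.neighborSet c₀ := h₁
          rw [hn₀] at this
          exact this
        have hd : T.dist z₁ y ≤ p₁.length := SimpleGraph.dist_le _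
        have hd2 : T.dist n₀ y = T.dist z₁ y := by rw [hz₁]
        rw [SimpleGraph.Walk.length_cons] at hplen
        have := hr y
        omega
  · exact ⟨c₀, hc₀, hr⟩

variable {V : Type*} [Fintype V] (G : SimpleGraph V)

def GoodPiece (s : Set V) (k r : ℕ) (τ : Type) [Fintype τ] (T : SimpleGraph τ) (c : τ) : Prop :=
  T.IsTree ∧
  ((T.neighborSet c = ∅) ∨ ¬ IsLeaf T c) ∧
  (∀ b : τ, T.dist c b ≤ r) ∧
  ∃ σ : ↥s ≃ {a : τ // pieceLeafP T c a},
    ∀ a : τ, ¬ IsLeaf T a → ∀ X₀ : Set ↥s,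
      (∀ u u' : ↥s, (avoid T a).Reachable ((σ u) : τ) ((σ u') : τ) → (u ∈ X₀ ↔ u' ∈ X₀)) →
      cutRank (G.induce s) X₀ ≤ k

lemma goodPiece_singleton (s : Set V) (h1 : Fintype.card ↥s = 1) (k r : ℕ) :
    ∃ (τ : Type) (_ : Fintype τ) (T : SimpleGraph τ) (c : τ), GoodPiece G s k r τ T c := by
  refine ⟨PUnit, inferInstance, ⊥, PUnit.unit, ?_, ?_, ?_, ?_⟩
  · constructor
    · rw [SimpleGraph.connected_iff]
      refine ⟨fun a b => ?_, ⟨PUnit.unit⟩⟩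
      rw [Subsingleton.elim a b]
    · exact SimpleGraph.isAcyclic_bot
  · left; simp [SimpleGraph.neighborSet]
  · intro b
    rw [Subsingleton.elim b PUnit.unit, SimpleGraph.dist_self]
    omega
  · have hP : ∀ a : PUnit, pieceLeafP (⊥ : SimpleGraph PUnit) PUnit.unit a := by
      intro a
      right
      refine ⟨Subsingleton.elim _ _, ?_⟩
      simp [SimpleGraph.neighborSet]
    refine ⟨(Fintype.equivOfCardEq ?_ : ↥s ≃ {a : PUnit // pieceLeafP ⊥ PUnit.unit a}), ?_⟩
    · have hcp : Fintype.card {a : PUnit // pieceLeafP ⊥ PUnit.unit a} = 1 :=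
        Fintype.card_eq_one_iff.mpr
          ⟨⟨PUnit.unit, hP _⟩, fun b => Subtype.ext (Subsingleton.elim _ _)⟩
      rw [h1, hcp]
    · intro a _ X₀ _
      have h5 := two_mul_cutRank_le (G.induce s) X₀
      rw [h1] at h5
      omega

lemma goodPiece_pair (s : Set V) (h2 : Fintype.card ↥s = 2) (k r : ℕ) (hk : 1 ≤ k)
    (hr : 1 ≤ r) :
    ∃ (τ : Type) (_ : Fintype τ) (T : SimpleGraph τ) (c : τ), GoodPiece G s k r τ T c := by
  have hb2 : 2 ≤ Fintype.card Bool := by simp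
  refine ⟨Option Bool, inferInstance, starG Bool, none, starG_isTree, ?_, ?_, ?_⟩
  · right; exact starG_not_isLeaf_none hb2
  · rintro (_ | b)
    · rw [SimpleGraph.dist_self]; omega
    · have : (starG Bool).dist none (some b) = 1 := by
        rw [SimpleGraph.dist_eq_one_iff_adj]
        exact Or.inl ⟨rfl, by simp⟩
      omega
  · have hPiff : ∀ a : Option Bool, pieceLeafP (starG Bool) none a ↔ a ≠ none := by
      intro a
      constructor
      · rintro (⟨hne, _⟩ | ⟨rfl, hemp⟩)
        · exact hne
        · exfalso
          have : (some true : Option Bool) ∈ (starG Bool).neighborSet none := by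
            rw [starG_neighborSet_none]; simp
          rw [hemp] at this
          exact this
      · intro hne
        exact Or.inl ⟨hne, (starG_isLeaf_iff hb2 a).mpr hne⟩
    refine ⟨Fintype.equivOfCardEq ?_, ?_⟩
    · rw [h2]
      have e1 : {a : Option Bool // pieceLeafP (starG Bool) none a} ≃
          {a : Option Bool // a ≠ none} := Equiv.subtypeEquivRight hPiff
      rw [Fintype.card_congr (e1.trans (optionNeNoneEquiv Bool))]
      simp
    · intro a _ X₀ _
      have h5 := two_mul_cutRank_le (G.induce s) X₀
      rw [h2] at h5
      omega

lemma goodPiece_general (s : Set V) (hcard : 3 ≤ Fintype.card ↥s) (k r : ℕ)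
    (hdec : HasRankDecomp (G.induce s) k r) :
    ∃ (τ : Type) (_ : Fintype τ) (T : SimpleGraph τ) (c : τ), GoodPiece G s k r τ T c := by
  obtain ⟨τ, ft, T, hT, σ, hwidth, c₀, hc₀⟩ := hdec
  haveI := ft
  have hτ3 : 3 ≤ Fintype.card τ := by
    have h1 : Fintype.card ↥s = Fintype.card {x : τ // IsLeaf T x} := Fintype.card_congr σ
    have h2 : Fintype.card {x : τ // IsLeaf T x} ≤ Fintype.card τ := Fintype.card_subtype_le _
    omega
  obtain ⟨c₁, hc₁nl, hc₁rad⟩ := recenter hT hτ3 hc₀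
  have hPiff : ∀ a : τ, IsLeaf T a ↔ pieceLeafP T c₁ a := by
    intro a
    constructor
    · intro hleaf
      left
      refine ⟨?_, hleaf⟩
      rintro rfl
      exact hc₁nl hleaf
    · rintro (⟨_, hleaf⟩ | ⟨rfl, hemp⟩)
      · exact hleaf
      · exfalso
        have hne := neighborSet_nonempty hT.isConnected (by omega) a
        rw [hemp] at hne
        exact Set.not_nonempty_empty hne
  refine ⟨τ, ft, T, c₁, hT, Or.inr hc₁nl, hc₁rad, σ.trans (Equiv.subtypeEquivRight hPiff), ?_⟩
  intro a ha X₀ hinv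
  refine hwidth a ha X₀ ?_
  intro u u' hreach
  exact hinv u u' hreach

end Pieces

section Final

lemma hasRankDecomp_cast {W : Type*} {F1 F2 : Fintype W} {H : SimpleGraph W} {k r : ℕ}
    (h : @HasRankDecomp W F1 H k r) : @HasRankDecomp W F2 H k r := by
  cases Subsingleton.elim F1 F2
  exact h

lemma set_card_eq_ncard {V : Type*} [Fintype V] (s : Set V) [Fintype ↥s] :
    Fintype.card ↥s = s.ncard := by
  rw [← Nat.card_eq_fintype_card, Nat.card_coe_set_eq]

lemma hasRankDecomp_of_pieces {V : Type*} [Fintype V] (G : SimpleGraph V)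
    {ι : Type} [Fintype ι] (h2 : 2 ≤ Fintype.card ι) (s : ι → Set V)
    (hcover : ∀ v : V, ∃! i, v ∈ s i)
    (hclosed : ∀ i, ∀ x ∈ s i, ∀ y, G.Adj x y → y ∈ s i)
    (k r : ℕ)
    (hpieces : ∀ i, ∃ (τ : Type) (_ : Fintype τ) (T : SimpleGraph τ) (c : τ),
      GoodPiece G (s i) k r τ T c) :
    HasRankDecomp G k (r + 1) := by
  choose t ft T c hgood using hpieces
  haveI := ft
  have htree := fun i => (hgood i).1
  have hcleaf := fun i => (hgood i).2.1
  have hrad := fun i => (hgood i).2.2.1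
  have hσ := fun i => (hgood i).2.2.2
  choose σi hwidth using hσ
  exact hasRankDecomp_glue G h2 s hcover hclosed t T c htree σi k r hwidth hcleaf hrad

set_option maxHeartbeats 2000000 in
/-- A graph of rank-depth `m` (on at least two vertices) has a connected component of
rank-depth at least `m - 1`. -/
theorem exists_component_rankDepth_ge {V : Type*} [Fintype V] (G : SimpleGraph V) (m : ℕ)
    (hV : 2 ≤ Fintype.card V) (h : rankDepth G = m) :
    ∃ c : G.ConnectedComponent, m - 1 ≤ rankDepth (G.induce c.supp) := by
  haveI : Nonempty V := Fintype.card_pos_iff.mp (by omega)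
  by_cases hm : m ≤ 1
  · refine ⟨G.connectedComponentMk (Classical.arbitrary V), ?_⟩
    have hm0 : m - 1 = 0 := by omega
    rw [hm0]
    exact Nat.zero_le _
  · haveI : Fintype G.ConnectedComponent := Fintype.ofFinite _
    set N := Fintype.card G.ConnectedComponent with hNdef
    have hN1 : 1 ≤ N := Fintype.card_pos_iff.mpr ⟨G.connectedComponentMk (Classical.arbitrary V)⟩
    by_cases hN : N = 1
    · -- G is connected: the unique component is everything
      set C := G.connectedComponentMk (Classical.arbitrary V) with hC
      have hsub : Subsingleton G.ConnectedComponent :=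
        Fintype.card_le_one_iff_subsingleton.mp (le_of_eq hN)
      have hsupp : C.supp = Set.univ := by
        ext w
        simp only [Set.mem_univ, iff_true, SimpleGraph.ConnectedComponent.mem_supp_iff]
        exact Subsingleton.elim _ _
      refine ⟨C, ?_⟩
      have hiso : rankDepth (G.induce C.supp) = rankDepth G := by
        have e1 : G.induce C.supp ≃g G.induce Set.univ :=
          ⟨Equiv.setCongr hsupp, Iff.rfl⟩
        exact rankDepth_iso (e1.trans (SimpleGraph.induceUnivIso G))
      rw [hiso, h]
      omega
    · have hN2 : 2 ≤ N := by omega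
      by_contra hcon
      push_neg at hcon
      have hmono : ∀ c : G.ConnectedComponent, rankDepth (G.induce c.supp) ≤ m - 2 := by
        intro c
        have := hcon c
        omega
      set eι : Fin N ≃ G.ConnectedComponent := (Fintype.equivFin G.ConnectedComponent).symm
        with heι
      have hcover : ∀ v : V, ∃! i, v ∈ (eι i).supp := by
        intro v
        refine ⟨eι.symm (G.connectedComponentMk v), ?_, ?_⟩
        · show v ∈ (eι (eι.symm _)).supp
          rw [Equiv.apply_symm_apply]
          exact (SimpleGraph.ConnectedComponent.mem_supp_iff _ _).mpr rfl
        · intro j hj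
          have hj' : G.connectedComponentMk v = eι j :=
            (SimpleGraph.ConnectedComponent.mem_supp_iff _ _).mp hj
          exact ((Equiv.symm_apply_eq eι).mpr hj').symm
      have hclosed : ∀ i, ∀ x ∈ (eι i).supp, ∀ y, G.Adj x y → y ∈ (eι i).supp := by
        intro i x hx y hadj
        have hx' : G.connectedComponentMk x = eι i :=
          (SimpleGraph.ConnectedComponent.mem_supp_iff _ _).mp hx
        have hyx : G.connectedComponentMk y = G.connectedComponentMk x :=
          SimpleGraph.ConnectedComponent.sound hadj.symm.reachable
        exact (SimpleGraph.ConnectedComponent.mem_supp_iff _ _).mpr (hyx.trans hx')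
      have hpieces : ∀ i : Fin N, ∃ (τ : Type) (_ : Fintype τ) (T : SimpleGraph τ) (c : τ),
          GoodPiece G ((eι i).supp) (m - 2) (m - 2) τ T c := by
        intro i
        have hpos : 1 ≤ ((eι i).supp).ncard := by
          rw [← set_card_eq_ncard]
          rw [Nat.succ_le_iff, Fintype.card_pos_iff]
          obtain ⟨v, hv⟩ := (eι i).exists_rep
          exact ⟨⟨v, (SimpleGraph.ConnectedComponent.mem_supp_iff _ _).mpr hv⟩⟩
        have hrd : rankDepth (G.induce ((eι i).supp)) ≤ m - 2 := hmono (eι i)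
        rcases Nat.lt_or_ge (((eι i).supp).ncard) 2 with hc1 | hc2
        · exact goodPiece_singleton G ((eι i).supp) (by rw [set_card_eq_ncard]; omega) _ _
        · rcases Nat.lt_or_ge (((eι i).supp).ncard) 3 with hc2' | hc3
          · have hge1 : 1 ≤ rankDepth (G.induce ((eι i).supp)) :=
              one_le_rankDepth (G.induce ((eι i).supp)) (by rw [set_card_eq_ncard]; omega)
            exact goodPiece_pair G ((eι i).supp) (by rw [set_card_eq_ncard]; omega) _ _
              (by omega) (by omega)
          · have hdec : HasRankDecomp (G.induce ((eι i).supp)) (m - 2) (m - 2) := by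
              have h1 := rankDepth_mem (G.induce ((eι i).supp))
                (by rw [set_card_eq_ncard]; omega)
              exact hasRankDecomp_mono h1 hrd hrd
            exact goodPiece_general G ((eι i).supp) (by rw [set_card_eq_ncard]; omega) _ _
              (hasRankDecomp_cast hdec)
      have hglue := hasRankDecomp_of_pieces G
        (by rw [Fintype.card_fin]; exact hN2) (fun i => (eι i).supp) hcover hclosed
        (m - 2) (m - 2) hpieces
      have hfinal : HasRankDecomp G (m - 1) (m - 1) :=
        hasRankDecomp_mono hglue (by omega) (by omega)
      have hle := rankDepth_le G hfinal
      omega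

end Final
end

section
/- Let $G$ be a finite simple graph of rank-width at most $q$ and let $M \subseteq V(G)$ with $|M| \geq 3k + 1$ for a positive integer $k$. Then there is a partition $(X, Y)$ of $V(G)$ such that the cut-rank $\rho_G(X) \leq q$ and both $|M \cap X| > k$ and $|M \cap Y| > k$. -/
open scoped Classical

/-- `G` admits a rank-decomposition of width at most `q`: a tree `T` all of whose
vertices have degree 1 or 3, together with a bijection `L` from `V(G)` to the leaves
of `T`, such that every edge `ab` of `T` has width (the cut-rank of the set of
vertices mapped to leaves in the component of `T - ab` containing `a`) at most `q`. -/
def HasRankDecompWidth {V : Type*} [Fintype V] (G : SimpleGraph V) (q : ℕ) : Prop :=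
  ∃ (t : Type) (_ : Fintype t) (T : SimpleGraph t),
    T.IsTree ∧
    (∀ x : t, (T.neighborSet x).ncard = 1 ∨ (T.neighborSet x).ncard = 3) ∧
    ∃ L : V ≃ {x : t // (T.neighborSet x).ncard = 1},
      ∀ a b : t, T.Adj a b →
        cutRank G {u : V | (T.deleteEdges {s(a, b)}).Reachable (L u).1 a} ≤ q

/-- The rank-width of `G`: the minimum width over all rank-decompositions
(zero for graphs with at most one vertex). -/
noncomputable def rankWidth {V : Type*} [Fintype V] (G : SimpleGraph V) : ℕ :=
  if Fintype.card V < 2 then 0 else sInf {q | HasRankDecompWidth G q}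

/-- The linear rank-width of `G`: the minimum over all orderings `v_1, …, v_n` of the
maximum cut-rank of a proper prefix (zero for graphs with fewer than two vertices). -/
noncomputable def linRankWidth {V : Type*} [Fintype V] (G : SimpleGraph V) : ℕ :=
  if Fintype.card V < 2 then 0 else
    sInf {w | ∃ e : Fin (Fintype.card V) ≃ V,
      ∀ i : Fin (Fintype.card V), cutRank G (e '' {j | j < i}) ≤ w}


namespace RWAux
open SimpleGraph

variable {t : Type*} {T : SimpleGraph t}

lemma bridge (hT : T.IsTree) {a b : t} (hab : T.Adj a b) :
    ¬ (T.deleteEdges {s(a, b)}).Reachable a b := by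
  have hB : T.IsBridge s(a, b) :=
    (isAcyclic_iff_forall_edge_isBridge.mp hT.IsAcyclic) (by simpa using hab)
  exact isBridge_iff.mp hB

lemma delete_comm (a b : t) :
    T.deleteEdges {s(a, b)} = T.deleteEdges {s(b, a)} := by
  rw [Sym2.eq_swap]

lemma cover_aux {a b : t} (hab : T.Adj a b) :
    ∀ {x y : t}, T.Walk x y →
      (T.deleteEdges {s(a, b)}).Reachable x y ∨
      ((T.deleteEdges {s(a, b)}).Reachable x a ∧ (T.deleteEdges {s(a, b)}).Reachable b y) ∨
      ((T.deleteEdges {s(a, b)}).Reachable x b ∧ (T.deleteEdges {s(a, b)}).Reachable a y) := by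
  intro x y w
  induction w with
  | nil => exact Or.inl (Reachable.refl _)
  | @cons u v y h p ih =>
    by_cases he : s(u, v) = s(a, b)
    · rw [Sym2.eq_iff] at he
      rcases he with ⟨rfl, rfl⟩ | ⟨rfl, rfl⟩
      · rcases ih with hr | ⟨h1, h2⟩ | ⟨h1, h2⟩
        · exact Or.inr (Or.inl ⟨Reachable.refl _, hr⟩)
        · exact Or.inr (Or.inl ⟨Reachable.refl _, h2⟩)
        · exact Or.inl h2
      · rcases ih with hr | ⟨h1, h2⟩ | ⟨h1, h2⟩
        · exact Or.inr (Or.inr ⟨Reachable.refl _, hr⟩)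
        · exact Or.inl h2
        · exact Or.inr (Or.inr ⟨Reachable.refl _, h2⟩)
    · have hAdj : (T.deleteEdges {s(a, b)}).Adj u v := by simp [h, he]
      rcases ih with hr | ⟨h1, h2⟩ | ⟨h1, h2⟩
      · exact Or.inl (hAdj.reachable.trans hr)
      · exact Or.inr (Or.inl ⟨hAdj.reachable.trans h1, h2⟩)
      · exact Or.inr (Or.inr ⟨hAdj.reachable.trans h1, h2⟩)

lemma cover (hT : T.IsTree) {a b : t} (hab : T.Adj a b) (x : t) :
    (T.deleteEdges {s(a, b)}).Reachable x a ∨ (T.deleteEdges {s(a, b)}).Reachable x b := by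
  obtain ⟨w⟩ := hT.isConnected.preconnected x a
  rcases cover_aux hab w with hr | ⟨h1, h2⟩ | ⟨h1, h2⟩
  · exact Or.inl hr
  · exact Or.inl h1
  · exact Or.inr h1

/-- Any walk witnessing reachability to `a` avoiding the edge `ab` can be chosen to
avoid the vertex `b` entirely. -/
lemma exists_walk_avoid (hT : T.IsTree) {a b x : t} (hab : T.Adj a b)
    (hx : (T.deleteEdges {s(a, b)}).Reachable x a) :
    ∃ w : T.Walk x a, b ∉ w.support := by
  obtain ⟨w0⟩ := hx
  set D := T.deleteEdges {s(a, b)} with hD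
  set p : D.Walk x a := w0.toPath.1 with hp
  have hPp : p.IsPath := w0.toPath.2
  have hsub : ∀ e ∈ p.edges, e ∈ T.edgeSet := by
    intro e he
    have := p.edges_subset_edgeSet he
    rw [hD, edgeSet_deleteEdges] at this
    exact this.1
  have hbp : b ∉ p.support := by
    intro hb
    have hd : (p.dropUntil b hb).IsPath := hPp.dropUntil hb
    have hsub' : ∀ e ∈ (p.dropUntil b hb).edges, e ∈ T.edgeSet := by
      intro e he; exact hsub e (Walk.edges_dropUntil_subset _ _ he)
    have hq : ((p.dropUntil b hb).transfer T hsub').IsPath := hd.transfer _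
    -- the one-edge path from b to a
    have h1 : (Walk.cons hab.symm Walk.nil : T.Walk b a).IsPath := by
      simp [Walk.cons_isPath_iff, hab.ne']
    have := (hT.existsUnique_path b a).unique hq h1
    have hedge : s(b, a) ∈ ((p.dropUntil b hb).transfer T hsub').edges := by
      rw [this]; simp
    rw [Walk.edges_transfer] at hedge
    have := (p.dropUntil b hb).edges_subset_edgeSet hedge
    rw [hD, edgeSet_deleteEdges] at this
    exact this.2 (by rw [Sym2.eq_swap]; exact rfl)
  exact ⟨p.transfer T hsub, by rwa [Walk.support_transfer]⟩

/-- A vertex cannot lie on two different "sides" of a vertex `a`. -/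
lemma side_unique (hT : T.IsTree) {a b c x : t} (hab : T.Adj a b) (hac : T.Adj a c)
    (hbc : b ≠ c) (hxb : (T.deleteEdges {s(b, a)}).Reachable x b)
    (hxc : (T.deleteEdges {s(c, a)}).Reachable x c) : False := by
  obtain ⟨w1, hw1⟩ := exists_walk_avoid hT hab.symm hxb
  obtain ⟨w2, hw2⟩ := exists_walk_avoid hT hac.symm hxc
  have hsup : a ∉ (w1.reverse.append w2).support := by
    rw [Walk.support_append]
    intro h
    rcases List.mem_append.mp h with h | h
    · exact hw1 (by simpa [Walk.support_reverse] using h)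
    · exact hw2 (List.mem_of_mem_tail h)
  set P := (w1.reverse.append w2).toPath
  have hPa : a ∉ (P : T.Walk b c).support :=
    fun h => hsup (Walk.support_toPath_subset _ h)
  have h2 : (Walk.cons hab.symm (Walk.cons hac Walk.nil) : T.Walk b c).IsPath := by
    simp [Walk.cons_isPath_iff, hab.ne, hab.ne', hac.ne, hac.ne', hbc]
  have := (hT.existsUnique_path b c).unique P.2 h2
  apply hPa
  rw [this]; simp

/-- Every vertex `x ≠ a` lies on the side of some neighbour of `a`. -/
lemma exists_side (hT : T.IsTree) {a x : t} (hxa : x ≠ a) :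
    ∃ b, T.Adj a b ∧ (T.deleteEdges {s(b, a)}).Reachable x b := by
  obtain ⟨w0⟩ := hT.isConnected.preconnected x a
  set p : T.Walk x a := w0.toPath.1 with hp
  have hPp : p.IsPath := w0.toPath.2
  have hr : p.reverse.IsPath := hPp.reverse
  obtain ⟨c, h, q, hq⟩ := Walk.exists_eq_cons_of_ne (Ne.symm hxa) p.reverse
  rw [hq, Walk.cons_isPath_iff] at hr
  refine ⟨c, h, ?_⟩
  have hsub : ∀ e ∈ q.reverse.edges, e ∈ (T.deleteEdges {s(c, a)}).edgeSet := by
    intro e he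
    rw [edgeSet_deleteEdges]
    refine ⟨q.reverse.edges_subset_edgeSet he, ?_⟩
    intro hee
    rw [Set.mem_singleton_iff] at hee
    subst hee
    exact hr.2 (by simpa [Walk.support_reverse] using Walk.snd_mem_support_of_mem_edges q.reverse he)
  exact ⟨q.reverse.transfer _ hsub⟩

end RWAux
namespace RWAux2
open RWAux
open SimpleGraph RWAux

variable {t : Type*} {T : SimpleGraph t}

lemma no_walk_from_leaf {c x : t} (hc : (T.neighborSet c).ncard = 1) (hcx : T.Adj c x)
    {y : t} (w : (T.deleteEdges {s(c, x)}).Walk c y) : c = y := by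
  cases w with
  | nil => rfl
  | cons h p =>
    exfalso
    obtain ⟨z0, hz0⟩ := Set.ncard_eq_one.mp hc
    have hx : x = z0 := by
      have : x ∈ T.neighborSet c := hcx
      rwa [hz0, Set.mem_singleton_iff] at this
    rcases h with ⟨hadj, hne⟩
    have hv : _ ∈ T.neighborSet c := hadj
    rw [hz0, Set.mem_singleton_iff] at hv
    apply hne
    rw [fromEdgeSet_adj]
    refine ⟨?_, hadj.ne⟩
    rw [hv, hx]
    exact rfl

variable {V : Type*}

/-- The set of vertices of `G` on the `a`-side of the tree edge `ab`. -/
def Sside (T : SimpleGraph t) (f : V → t) (a b : t) : Set V :=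
  {u | (T.deleteEdges {s(a, b)}).Reachable (f u) a}

lemma Sside_compl (hT : T.IsTree) (f : V → t) {a b : t} (hab : T.Adj a b) :
    Sside T f b a = (Sside T f a b)ᶜ := by
  ext u
  simp only [Sside, Set.mem_compl_iff, Set.mem_setOf_eq]
  rw [delete_comm b a]
  constructor
  · intro h1 h2
    exact bridge hT hab (h2.symm.trans h1)
  · intro h
    rcases cover hT hab (f u) with h1 | h1
    · exact absurd h1 h
    · exact h1

lemma mem_side_of_ne (hT : T.IsTree) (f : V → t) {c : t} {u : V} (h : f u ≠ c) :
    ∃ b, T.Adj c b ∧ u ∈ Sside T f b c := by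
  obtain ⟨b, hb, hr⟩ := exists_side hT h
  exact ⟨b, hb, hr⟩

lemma count_three (hT : T.IsTree) (f : V → t) {c : t} [Fintype V]
    (h3 : (T.neighborSet c).ncard = 3)
    (hleaf : ∀ u : V, (T.neighborSet (f u)).ncard = 1)
    (M : Set V) (k : ℕ) (hk : ∀ x, T.Adj c x → (M ∩ Sside T f x c).ncard ≤ k) :
    M.ncard ≤ 3 * k := by
  obtain ⟨x1, x2, x3, h12, h13, h23, hset⟩ := Set.ncard_eq_three.mp h3
  have hadj : ∀ x ∈ T.neighborSet c, T.Adj c x := fun x hx => hx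
  have hsub : M ⊆ (M ∩ Sside T f x1 c) ∪ (M ∩ Sside T f x2 c) ∪ (M ∩ Sside T f x3 c) := by
    intro u hu
    have hne : f u ≠ c := by
      intro h; have := hleaf u; rw [h, h3] at this; omega
    obtain ⟨b, hb, hub⟩ := mem_side_of_ne hT f hne
    have : b ∈ T.neighborSet c := hb
    rw [hset] at this
    rcases this with rfl | rfl | rfl
    · exact Or.inl (Or.inl ⟨hu, hub⟩)
    · exact Or.inl (Or.inr ⟨hu, hub⟩)
    · exact Or.inr ⟨hu, hub⟩
  calc M.ncard ≤ ((M ∩ Sside T f x1 c) ∪ (M ∩ Sside T f x2 c) ∪ (M ∩ Sside T f x3 c)).ncard :=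
        Set.ncard_le_ncard hsub (Set.toFinite _)
    _ ≤ ((M ∩ Sside T f x1 c) ∪ (M ∩ Sside T f x2 c)).ncard + (M ∩ Sside T f x3 c).ncard :=
        Set.ncard_union_le _ _
    _ ≤ (M ∩ Sside T f x1 c).ncard + (M ∩ Sside T f x2 c).ncard + (M ∩ Sside T f x3 c).ncard :=
        by gcongr; exact Set.ncard_union_le _ _
    _ ≤ 3 * k := by
        have h1 := hk x1 (hadj _ (by rw [hset]; simp))
        have h2 := hk x2 (hadj _ (by rw [hset]; simp))
        have h3' := hk x3 (hadj _ (by rw [hset]; simp))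
        omega

lemma leaf_side_subsingleton (hT : T.IsTree) (f : V → t) (hfinj : Function.Injective f)
    {c x : t} (hc : (T.neighborSet c).ncard = 1) (hcx : T.Adj c x) :
    (Sside T f c x).Subsingleton := by
  intro u hu v hv
  have hu' : f u = c := (no_walk_from_leaf hc hcx hu.symm.some).symm
  have hv' : f v = c := (no_walk_from_leaf hc hcx hv.symm.some).symm
  exact hfinj (hu'.trans hv'.symm)

/-- The set of tree-vertices on the `a` side of edge `ab`. -/
def Wside (T : SimpleGraph t) (a b : t) : Set t :=
  {x | (T.deleteEdges {s(a, b)}).Reachable x a}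

lemma Wside_ssubset (hT : T.IsTree) {a b c : t} (hab : T.Adj a b) (hbc : T.Adj b c)
    (hac : a ≠ c) : Wside T a b ⊂ Wside T b c := by
  constructor
  · intro x hx
    obtain ⟨w, hw⟩ := exists_walk_avoid hT hab hx
    have hsub : ∀ e ∈ (w.concat hab).edges, e ∈ (T.deleteEdges {s(b, c)}).edgeSet := by
      intro e he
      rw [Walk.edges_concat, List.concat_eq_append] at he
      rw [edgeSet_deleteEdges]
      rcases List.mem_append.mp he with he | he
      · refine ⟨w.edges_subset_edgeSet he, ?_⟩
        intro hee
        rw [Set.mem_singleton_iff] at hee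
        subst hee
        exact hw (Walk.fst_mem_support_of_mem_edges w he)
      · rw [List.mem_singleton] at he
        subst he
        refine ⟨hab, ?_⟩
        intro hee
        rw [Set.mem_singleton_iff, Sym2.eq_iff] at hee
        rcases hee with ⟨h1, h2⟩ | ⟨h1, h2⟩
        · exact hab.ne h1
        · exact hac h1
    exact ⟨(w.concat hab).transfer _ hsub⟩
  · intro hsub
    have hb : b ∈ Wside T b c := Reachable.refl _
    have : b ∈ Wside T a b := hsub hb
    exact bridge hT hab this.symm

/-- The core combinatorial lemma: in a rank-decomposition tree there is an edge
both of whose sides contain more than `k` elements of `M`. -/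
lemma main_combinatorial [Fintype t] [Fintype V] (hT : T.IsTree)
    (hdeg : ∀ x : t, (T.neighborSet x).ncard = 1 ∨ (T.neighborSet x).ncard = 3)
    (f : V → t) (hfleaf : ∀ u : V, (T.neighborSet (f u)).ncard = 1)
    (hfinj : Function.Injective f) (M : Set V) (k : ℕ) (hk : 1 ≤ k)
    (hM : 3 * k + 1 ≤ M.ncard) :
    ∃ a b, T.Adj a b ∧ k < (M ∩ Sside T f a b).ncard ∧ k < (M ∩ Sside T f b a).ncard := by
  set m : t → t → ℕ := fun a b => (M ∩ Sside T f a b).ncard with hm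
  have hsum : ∀ a b, T.Adj a b → m a b + m b a = M.ncard := by
    intro a b hab
    have : M ∩ Sside T f b a = M \ Sside T f a b := by
      rw [Sside_compl hT f hab, Set.diff_eq]
    rw [hm]
    simp only []
    rw [this]
    exact Set.ncard_inter_add_ncard_diff_eq_ncard M _ (Set.toFinite _)
  by_contra H
  push_neg at H
  have horient : ∀ a b, T.Adj a b → m a b ≤ k ∨ m b a ≤ k := by
    intro a b hab
    by_contra h
    push_neg at h
    exact absurd (H a b hab h.1) (not_le.mpr h.2)
  -- the set of oriented edges with small tail side
  set R : Set (t × t) := {p | T.Adj p.1 p.2 ∧ m p.1 p.2 ≤ k} with hR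
  have hM0 : M.Nonempty := by
    apply Set.nonempty_of_ncard_ne_zero; omega
  obtain ⟨u0, hu0⟩ := hM0
  have hRne : R.Nonempty := by
    obtain ⟨z0, hz0⟩ := Set.ncard_eq_one.mp (hfleaf u0)
    have hadj : T.Adj (f u0) z0 := by
      have : z0 ∈ T.neighborSet (f u0) := by rw [hz0]; exact rfl
      exact this
    rcases horient _ _ hadj with h | h
    · exact ⟨(f u0, z0), hadj, h⟩
    · exact ⟨(z0, f u0), hadj.symm, h⟩
  obtain ⟨p, hpR, hmax⟩ := Set.Finite.exists_maximalFor
    (fun p : t × t => (Wside T p.1 p.2).ncard) R (Set.toFinite R) hRne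
  obtain ⟨a, b⟩ := p
  have hab : T.Adj a b := hpR.1
  have hmab : m a b ≤ k := hpR.2
  -- b is a sink: every side at b other than b's own is small
  have hsink : ∀ x, T.Adj b x → m x b ≤ k := by
    intro x hbx
    by_contra hxk
    have hbxk : m b x ≤ k := by
      rcases horient x b hbx.symm with h | h
      · exact absurd h hxk
      · exact h
    have hax : a ≠ x := by
      rintro rfl
      exact hxk hmab
    have hss := Wside_ssubset hT hab hbx hax
    have hlt : (Wside T a b).ncard < (Wside T b x).ncard :=
      Set.ncard_lt_ncard hss (Set.toFinite _)
    have heq := @hmax (b, x) ⟨hbx, hbxk⟩ (le_of_lt hlt)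
    dsimp only at heq
    omega
  rcases hdeg b with h1 | h3
  · -- b is a leaf; its unique neighbour is a
    have hz : (T.neighborSet b) = {a} := by
      obtain ⟨z0, hz0⟩ := Set.ncard_eq_one.mp h1
      have : a ∈ T.neighborSet b := hab.symm
      rw [hz0, Set.mem_singleton_iff] at this
      rw [hz0, this]
    have hba : m b a ≤ k := by
      have hss := leaf_side_subsingleton hT f hfinj h1 hab.symm
      have hle : m b a ≤ 1 :=
        le_trans (Set.ncard_le_ncard Set.inter_subset_right (Set.toFinite _))
          ((Set.ncard_le_one (Set.toFinite _)).mpr fun a ha b hb => hss ha hb)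
      omega
    have := hsum a b hab
    have hab' := hsink a hab.symm
    omega
  · have := count_three hT f h3 hfleaf M k (fun x hx => hsink x hx)
    omega

end RWAux2

namespace RWAux3
open SimpleGraph

variable {α : Type*}

/-- There is no cycle through a pendant vertex. -/
lemma no_cycle_at_pendant {G : SimpleGraph α} {p0 z0 : α}
    (hp : ∀ y, G.Adj p0 y → y = z0) {c : G.Walk p0 p0} (hc : c.IsCycle) : False := by
  cases c with
  | nil => exact hc.ne_nil rfl
  | @cons _ w _ h q =>
    have hw : w = z0 := hp w h
    have hnodup : (Walk.cons h q).edges.Nodup := hc.isCircuit.isTrail.edges_nodup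
    rw [Walk.edges_cons, List.nodup_cons] at hnodup
    apply hnodup.1
    obtain ⟨y, h2, q2, hq2⟩ := Walk.exists_eq_cons_of_ne h.ne q.reverse
    have hy : y = w := (hp y h2).trans hw.symm
    subst hy
    have : s(p0, y) ∈ q.reverse.edges := by rw [hq2]; simp
    rw [Walk.edges_reverse, List.mem_reverse] at this
    exact this

/-- The adjacency relation of the extension. -/
def attach2Adj {t : Type} (T : SimpleGraph t) (x0 : t) : t ⊕ Bool → t ⊕ Bool → Prop
  | Sum.inl a, Sum.inl b => T.Adj a b
  | Sum.inl a, Sum.inr _ => a = x0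
  | Sum.inr _, Sum.inl b => b = x0
  | Sum.inr _, Sum.inr _ => False

/-- Attach two pendant vertices at `x0`. -/
def attach2 {t : Type} (T : SimpleGraph t) (x0 : t) : SimpleGraph (t ⊕ Bool) where
  Adj := attach2Adj T x0
  symm := by
    refine ⟨?_⟩
    rintro (a | i) (b | j) h
    · exact T.adj_symm h
    · exact h
    · exact h
    · exact h.elim
  loopless := by
    refine ⟨?_⟩
    rintro (a | i) h
    · exact T.irrefl h
    · exact h

variable {t : Type} {T : SimpleGraph t} {x0 : t}

lemma attach2_adj_inl_inl {a b : t} : (attach2 T x0).Adj (Sum.inl a) (Sum.inl b) ↔ T.Adj a b :=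
  Iff.rfl

lemma attach2_adj_inr {i : Bool} {v : t ⊕ Bool} :
    (attach2 T x0).Adj (Sum.inr i) v ↔ v = Sum.inl x0 := by
  cases v with
  | inl b =>
    constructor
    · intro h; exact congrArg Sum.inl (h : b = x0)
    · intro h; exact (Sum.inl.inj h : b = x0)
  | inr j =>
    constructor
    · intro h; exact h.elim
    · intro h; exact (Sum.inr_ne_inl h).elim

lemma attach2_nb_inr (i : Bool) :
    (attach2 T x0).neighborSet (Sum.inr i) = {Sum.inl x0} := by
  ext v; simp only [mem_neighborSet, Set.mem_singleton_iff, attach2_adj_inr]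

lemma attach2_nb_inl_ne {a : t} (ha : a ≠ x0) :
    (attach2 T x0).neighborSet (Sum.inl a) = Sum.inl '' T.neighborSet a := by
  ext v
  cases v with
  | inl b =>
    simp only [mem_neighborSet, attach2_adj_inl_inl, Set.mem_image]
    constructor
    · intro h; exact ⟨b, h, rfl⟩
    · rintro ⟨c, hc, hcb⟩; rwa [← Sum.inl.inj hcb]
  | inr j =>
    simp only [mem_neighborSet, Set.mem_image]
    constructor
    · intro h; exact absurd (h : a = x0) ha
    · rintro ⟨c, hc, hcb⟩; exact (Sum.inl_ne_inr hcb).elim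

lemma attach2_nb_inl_x0 :
    (attach2 T x0).neighborSet (Sum.inl x0) =
      Sum.inl '' T.neighborSet x0 ∪ {Sum.inr true, Sum.inr false} := by
  ext v
  cases v with
  | inl b =>
    simp only [mem_neighborSet, attach2_adj_inl_inl, Set.mem_union, Set.mem_image,
      Set.mem_insert_iff, Set.mem_singleton_iff]
    constructor
    · intro h; exact Or.inl ⟨b, h, rfl⟩
    · rintro (⟨c, hc, hcb⟩ | h | h)
      · rwa [← Sum.inl.inj hcb]
      · exact (Sum.inl_ne_inr h).elim
      · exact (Sum.inl_ne_inr h).elim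
  | inr j =>
    simp only [mem_neighborSet, Set.mem_union, Set.mem_image, Set.mem_insert_iff,
      Set.mem_singleton_iff]
    constructor
    · intro _; cases j <;> simp
    · intro _; exact rfl

/-- The embedding homomorphism. -/
def inlHom (T : SimpleGraph t) (x0 : t) : T →g attach2 T x0 where
  toFun := Sum.inl
  map_rel' := fun h => h

lemma attach2_connected (hT : T.Connected) : (attach2 T x0).Connected := by
  have hre : ∀ v : t ⊕ Bool, (attach2 T x0).Reachable v (Sum.inl x0) := by
    rintro (a | i)
    · exact (hT.preconnected a x0).map (inlHom T x0)
    · exact Adj.reachable (by rw [attach2_adj_inr])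
  constructor
  intro u v
  exact (hre u).trans (hre v).symm

lemma lift_walk : ∀ {u v : t ⊕ Bool} (p : (attach2 T x0).Walk u v) {a b : t},
    u = Sum.inl a → v = Sum.inl b → (∀ w ∈ p.support, ∃ z, w = Sum.inl z) →
    ∃ q : T.Walk a b, q.edges.map (Sym2.map Sum.inl) = p.edges ∧
      q.support.map Sum.inl = p.support := by
  intro u v p
  induction p with
  | nil =>
    intro a b hu hv _
    subst hu
    have : a = b := Sum.inl.inj hv
    subst this
    exact ⟨Walk.nil, by simp, by simp⟩
  | @cons u w v h p ih =>
    intro a b hu hv hsup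
    subst hu
    obtain ⟨c, hc⟩ := hsup w (by simp [Walk.support_cons])
    subst hc
    have hadj : T.Adj a c := h
    obtain ⟨q, hq1, hq2⟩ := ih rfl hv (fun z hz => hsup z (by simp [Walk.support_cons, hz]))
    refine ⟨Walk.cons hadj q, ?_, ?_⟩
    · simp [Walk.edges_cons, hq1, Sym2.map_pair_eq]
    · simp [Walk.support_cons, hq2]

lemma attach2_acyclic (hT : T.IsTree) : (attach2 T x0).IsAcyclic := by
  intro v c hc
  have hno : ∀ i : Bool, Sum.inr i ∉ c.support := by
    intro i hi
    exact no_cycle_at_pendant (z0 := Sum.inl x0)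
      (fun y hy => attach2_adj_inr.mp hy) (hc.rotate hi)
  obtain ⟨a, ha⟩ : ∃ z, v = Sum.inl z := by
    cases v with
    | inl a => exact ⟨a, rfl⟩
    | inr i => exact absurd c.start_mem_support (hno i)
  subst ha
  obtain ⟨q, hq1, hq2⟩ := lift_walk c rfl rfl (by
    intro w hw
    cases w with
    | inl z => exact ⟨z, rfl⟩
    | inr i => exact absurd hw (hno i))
  have hqcyc : q.IsCycle := by
    refine ⟨⟨⟨?_⟩, ?_⟩, ?_⟩
    · have := hc.isCircuit.isTrail.edges_nodup
      rw [← hq1] at this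
      exact this.of_map _
    · intro hq
      subst hq
      have : c.edges = [] := by rw [← hq1]; simp
      have h3 := hc.three_le_length
      rw [← Walk.length_edges, this] at h3
      simp at h3
    · have := hc.support_nodup
      have htail : q.support.tail.map Sum.inl = c.support.tail := by
        rw [← hq2]
        cases q.support with
        | nil => simp
        | cons x l => simp
      rw [← htail] at this
      exact this.of_map _
  exact hT.IsAcyclic q hqcyc

lemma attach2_isTree (hT : T.IsTree) : (attach2 T x0).IsTree :=
  ⟨attach2_connected hT.isConnected, attach2_acyclic hT⟩


section Counting
variable [Fintype t]

lemma attach2_deg (hdeg : ∀ x, (T.neighborSet x).ncard = 1 ∨ (T.neighborSet x).ncard = 3)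
    (hx0 : (T.neighborSet x0).ncard = 1) :
    ∀ v, ((attach2 T x0).neighborSet v).ncard = 1 ∨
      ((attach2 T x0).neighborSet v).ncard = 3 := by
  rintro (a | i)
  · by_cases ha : a = x0
    · right
      rw [ha, attach2_nb_inl_x0]
      have hdisj : Disjoint (Sum.inl '' T.neighborSet x0)
          ({Sum.inr true, Sum.inr false} : Set (t ⊕ Bool)) := by
        rw [Set.disjoint_left]
        rintro x ⟨c, _, rfl⟩ (h | h) <;> simp at h
      rw [Set.ncard_union_eq hdisj (Set.toFinite _) (Set.toFinite _),
        Set.ncard_image_of_injective _ Sum.inl_injective, hx0,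
        Set.ncard_pair (by simp)]
    · rw [attach2_nb_inl_ne ha, Set.ncard_image_of_injective _ Sum.inl_injective]
      exact hdeg a
  · left
    rw [attach2_nb_inr]
    exact Set.ncard_singleton _

/-- Split a subtype over a sum type. -/
def sumSubtypeEquiv {α β : Type*} (P : α ⊕ β → Prop) :
    {x : α ⊕ β // P x} ≃ {a : α // P (Sum.inl a)} ⊕ {b : β // P (Sum.inr b)} where
  toFun x := match x with
    | ⟨Sum.inl a, h⟩ => Sum.inl ⟨a, h⟩
    | ⟨Sum.inr b, h⟩ => Sum.inr ⟨b, h⟩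
  invFun x := match x with
    | Sum.inl ⟨a, h⟩ => ⟨Sum.inl a, h⟩
    | Sum.inr ⟨b, h⟩ => ⟨Sum.inr b, h⟩
  left_inv := by rintro ⟨(a | b), h⟩ <;> rfl
  right_inv := by rintro (⟨a, h⟩ | ⟨b, h⟩) <;> rfl

lemma attach2_leafcard {n : ℕ}
    (hx0 : (T.neighborSet x0).ncard = 1)
    (hcard : Nat.card {x : t // (T.neighborSet x).ncard = 1} = n) :
    Nat.card {v : t ⊕ Bool // ((attach2 T x0).neighborSet v).ncard = 1} = n + 1 := by
  set P : t ⊕ Bool → Prop := fun v => ((attach2 T x0).neighborSet v).ncard = 1 with hP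
  have hinr : ∀ i : Bool, P (Sum.inr i) := by
    intro i
    rw [hP]
    simp only [attach2_nb_inr]
    exact Set.ncard_singleton _
  have hinl : ∀ a : t, P (Sum.inl a) ↔ ((T.neighborSet a).ncard = 1 ∧ a ≠ x0) := by
    intro a
    by_cases ha : a = x0
    · rw [ha]
      constructor
      · intro h
        exfalso
        rw [hP] at h
        simp only [attach2_nb_inl_x0] at h
        have hdisj : Disjoint (Sum.inl '' T.neighborSet x0)
            ({Sum.inr true, Sum.inr false} : Set (t ⊕ Bool)) := by
          rw [Set.disjoint_left]
          rintro x ⟨c, _, rfl⟩ (h | h) <;> simp at h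
        rw [Set.ncard_union_eq hdisj (Set.toFinite _) (Set.toFinite _),
          Set.ncard_image_of_injective _ Sum.inl_injective, hx0,
          Set.ncard_pair (by simp)] at h
        omega
      · rintro ⟨-, h⟩; exact absurd rfl h
    · rw [hP]
      simp only [attach2_nb_inl_ne ha, Set.ncard_image_of_injective _ Sum.inl_injective]
      constructor
      · intro h; exact ⟨h, ha⟩
      · rintro ⟨h, -⟩; exact h
  have e1 := sumSubtypeEquiv P
  rw [Nat.card_congr e1, Nat.card_sum]
  have e2 : {b : Bool // P (Sum.inr b)} ≃ Bool := Equiv.subtypeUnivEquiv hinr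
  rw [Nat.card_congr e2]
  have e3 : {a : t // P (Sum.inl a)} ≃
      {b : {x : t // (T.neighborSet x).ncard = 1} // b ≠ ⟨x0, hx0⟩} := by
    refine (Equiv.subtypeEquivRight hinl).trans ?_
    refine ((Equiv.subtypeSubtypeEquivSubtypeInter _ _).symm.trans ?_)
    refine Equiv.subtypeEquivRight ?_
    intro b
    constructor
    · intro h he; exact h (by rw [he])
    · intro h he; exact h (Subtype.ext he)
  rw [Nat.card_congr e3]
  have hcard' : Fintype.card {x : t // (T.neighborSet x).ncard = 1} = n := by
    rw [← Nat.card_eq_fintype_card]; exact hcard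
  have hn1 : 1 ≤ n := by
    rw [← hcard']
    exact Fintype.card_pos_iff.mpr ⟨⟨x0, hx0⟩⟩
  rw [Nat.card_eq_fintype_card]
  have := Fintype.card_subtype_compl
    (fun b : {x : t // (T.neighborSet x).ncard = 1} => b = ⟨x0, hx0⟩)
  have h1 : Fintype.card {b : {x : t // (T.neighborSet x).ncard = 1} // b = ⟨x0, hx0⟩} = 1 :=
    Fintype.card_subtype_eq _
  have hconv : Fintype.card {b : {x : t // (T.neighborSet x).ncard = 1} // b ≠ ⟨x0, hx0⟩}
      = Fintype.card {b : {x : t // (T.neighborSet x).ncard = 1} // ¬ b = ⟨x0, hx0⟩} := rfl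
  rw [hconv, this, h1, hcard']
  simp [Nat.card_eq_fintype_card]
  omega

end Counting

lemma top_bool_isTree : (⊤ : SimpleGraph Bool).IsTree := by
  constructor
  · constructor
    intro u v
    by_cases h : u = v
    · subst h; exact Reachable.refl _
    · exact Adj.reachable (by simp [h])
  · intro v c hc
    have h3 := hc.three_le_length
    have hnodup := hc.support_nodup
    have hlen := List.Nodup.length_le_card hnodup
    rw [List.length_tail, Walk.length_support] at hlen
    simp only [Fintype.card_bool] at hlen
    omega

lemma top_bool_deg (x : Bool) : ((⊤ : SimpleGraph Bool).neighborSet x).ncard = 1 := by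
  have hset : (⊤ : SimpleGraph Bool).neighborSet x = {x}ᶜ := by
    ext y
    simp only [mem_neighborSet, top_adj, Set.mem_compl_iff, Set.mem_singleton_iff]
    exact ne_comm
  rw [hset]
  have := Set.ncard_add_ncard_compl ({x} : Set Bool)
  rw [Set.ncard_singleton] at this
  simp only [Nat.card_eq_fintype_card, Fintype.card_bool] at this
  omega

lemma top_bool_leafcard :
    Nat.card {x : Bool // ((⊤ : SimpleGraph Bool).neighborSet x).ncard = 1} = 2 := by
  rw [Nat.card_congr (Equiv.subtypeUnivEquiv top_bool_deg)]
  simp [Nat.card_eq_fintype_card]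

theorem tree_exists : ∀ n : ℕ, 2 ≤ n → ∃ (t : Type) (_ : Fintype t) (T : SimpleGraph t),
    T.IsTree ∧ (∀ x, (T.neighborSet x).ncard = 1 ∨ (T.neighborSet x).ncard = 3) ∧
    Nat.card {x : t // (T.neighborSet x).ncard = 1} = n := by
  intro n hn
  induction n, hn using Nat.le_induction with
  | base =>
    exact ⟨Bool, inferInstance, ⊤, top_bool_isTree, fun x => Or.inl (top_bool_deg x),
      top_bool_leafcard⟩
  | succ n hn ih =>
    obtain ⟨t, ft, T, hT, hdeg, hcard⟩ := ih
    have hpos : 0 < Nat.card {x : t // (T.neighborSet x).ncard = 1} := by omega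
    have hne : Nonempty {x : t // (T.neighborSet x).ncard = 1} := (Nat.card_pos_iff.mp hpos).1
    obtain ⟨⟨x0, hx0⟩⟩ := hne
    exact ⟨t ⊕ Bool, inferInstance, attach2 T x0, attach2_isTree hT, attach2_deg hdeg hx0,
      attach2_leafcard hx0 hcard⟩

end RWAux3

lemma cutRank_le_card {V : Type*} [Fintype V] (G : SimpleGraph V) (S : Set V) :
    cutRank G S ≤ Fintype.card V := by
  refine le_trans (Matrix.rank_le_card_height _) ?_
  exact Fintype.card_le_of_injective _ Subtype.val_injective

/-- If `G` has rank-width at most `q` and `M ⊆ V(G)` has `|M| ≥ 3k + 1` for a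
positive integer `k`, then there is a vertex partition `(X, Xᶜ)` with
`cutRank G X ≤ q`, `|M ∩ X| > k` and `|M ∩ Xᶜ| > k`. -/
theorem balanced_partition_of_rankWidth {V : Type*} [Fintype V] (G : SimpleGraph V)
    (q k : ℕ) (hk : 1 ≤ k) (hq : rankWidth G ≤ q)
    (M : Set V) (hM : 3 * k + 1 ≤ M.ncard) :
    ∃ X : Set V, cutRank G X ≤ q ∧ k < (M ∩ X).ncard ∧ k < (M ∩ Xᶜ).ncard := by
  classical
  have hcardV : 3 * k + 1 ≤ Fintype.card V := le_trans hM (by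
    have := Set.ncard_le_ncard (Set.subset_univ M) (Set.toFinite _)
    simpa [Set.ncard_univ, Nat.card_eq_fintype_card] using this)
  have hV2 : ¬ (Fintype.card V < 2) := by omega
  rw [rankWidth, if_neg hV2] at hq
  have hne : HasRankDecompWidth G (Fintype.card V) := by
    obtain ⟨t, ft, T, hT, hdeg, hcard⟩ := RWAux3.tree_exists (Fintype.card V) (by omega)
    refine ⟨t, ft, T, hT, hdeg, ?_⟩
    have hce : Fintype.card {x : t // (T.neighborSet x).ncard = 1} = Fintype.card V := by
      rw [← Nat.card_eq_fintype_card]; exact hcard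
    exact ⟨Fintype.equivOfCardEq hce.symm, fun a b _ => cutRank_le_card G _⟩
  have hmem : HasRankDecompWidth G q := by
    have hs : sInf {q | HasRankDecompWidth G q} ∈ {q | HasRankDecompWidth G q} :=
      Nat.sInf_mem ⟨_, hne⟩
    obtain ⟨t, ft, T, hT, hdeg, L, hw⟩ := hs
    exact ⟨t, ft, T, hT, hdeg, L, fun a b hab => le_trans (hw a b hab) hq⟩
  obtain ⟨t, ft, T, hT, hdeg, L, hw⟩ := hmem
  haveI := ft
  have hfinj : Function.Injective (fun u : V => (L u).1) := fun u v h =>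
    L.injective (Subtype.ext h)
  have hfleaf : ∀ u : V, (T.neighborSet ((fun u : V => (L u).1) u)).ncard = 1 :=
    fun u => (L u).2
  obtain ⟨a, b, hab, h1, h2⟩ := RWAux2.main_combinatorial hT hdeg (fun u => (L u).1)
    hfleaf hfinj M k hk hM
  refine ⟨RWAux2.Sside T (fun u => (L u).1) a b, ?_, h1, ?_⟩
  · exact hw a b hab
  · rw [← RWAux2.Sside_compl hT _ hab]
    exact h2
end

section
/- For every $n \geq 1$, the graph $K_n \tri K_n$ has no induced cycle of length 4, and consequently no induced subgraph isomorphic to the wheel $W_4$ or to $\overline{BW_3}$. -/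
open scoped Classical

/-- The graph `K_n ⊲ K_n`: two copies of `K_n` with orderings `v_1, …, v_n` and
`w_1, …, w_n`, where `v_i w_j` is an edge iff `i ≥ j`. -/
def KtriK (n : ℕ) : SimpleGraph (Fin n ⊕ Fin n) where
  Adj a b := a ≠ b ∧
    (match a, b with
     | Sum.inl _, Sum.inl _ => True
     | Sum.inr _, Sum.inr _ => True
     | Sum.inl i, Sum.inr j => j ≤ i
     | Sum.inr j, Sum.inl i => j ≤ i)
  symm := ⟨by rintro (i | i) (j | j) ⟨h1, h2⟩ <;> exact ⟨Ne.symm h1, h2⟩⟩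
  loopless := ⟨by rintro (i | i) ⟨h1, _⟩ <;> exact h1 rfl⟩

/-- `H` is isomorphic to an induced subgraph of `G`. -/
def HasInducedCopy {V W : Type*} (G : SimpleGraph V) (H : SimpleGraph W) : Prop :=
  ∃ S : Set V, Nonempty (H ≃g G.induce S)

/-- The wheel `W_4`: a 4-cycle `0 1 2 3` plus the hub `4` adjacent to all cycle vertices. -/
def W4 : SimpleGraph (Fin 5) :=
  SimpleGraph.fromRel (fun a b =>
    (a = 0 ∧ b = 1) ∨ (a = 1 ∧ b = 2) ∨ (a = 2 ∧ b = 3) ∨ (a = 3 ∧ b = 0) ∨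
    (a = 4 ∧ (b = 0 ∨ b = 1 ∨ b = 2 ∨ b = 3)))

/-- `BW_3`: two triangles `0 1 2` and `3 4 5`, a perfect matching `0-3`, `1-4`, `2-5`,
and a vertex `6` adjacent to `3, 4, 5`. -/
def BW3 : SimpleGraph (Fin 7) :=
  SimpleGraph.fromRel (fun a b =>
    (a = 0 ∧ b = 1) ∨ (a = 0 ∧ b = 2) ∨ (a = 1 ∧ b = 2) ∨
    (a = 3 ∧ b = 4) ∨ (a = 3 ∧ b = 5) ∨ (a = 4 ∧ b = 5) ∨
    (a = 0 ∧ b = 3) ∨ (a = 1 ∧ b = 4) ∨ (a = 2 ∧ b = 5) ∨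
    (a = 6 ∧ (b = 3 ∨ b = 4 ∨ b = 5)))

lemma key (n : ℕ) (a b c d : Fin n ⊕ Fin n)
    (h1 : (KtriK n).Adj a b) (h2 : (KtriK n).Adj b c)
    (h3 : (KtriK n).Adj c d) (h4 : (KtriK n).Adj d a)
    (hac : ¬ (KtriK n).Adj a c) (hbd : ¬ (KtriK n).Adj b d)
    (hac' : a ≠ c) (hbd' : b ≠ d) : False := by
  rcases a with i | i <;> rcases b with j | j <;> rcases c with k | k <;> rcases d with l | l <;>
    simp only [KtriK, ne_eq, Sum.inl.injEq, Sum.inr.injEq, reduceCtorEq, not_and, not_not,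
      not_false_eq_true, true_implies, and_true, true_and, not_true, Fin.le_def, Fin.ext_iff]
      at h1 h2 h3 h4 hac hbd hac' hbd' <;> omega

lemma no_copy {W : Type*} (H : SimpleGraph W) (p q r s : W)
    (hpq : H.Adj p q) (hqr : H.Adj q r) (hrs : H.Adj r s) (hsp : H.Adj s p)
    (hpr : ¬ H.Adj p r) (hqs : ¬ H.Adj q s) (hpr' : p ≠ r) (hqs' : q ≠ s)
    (n : ℕ) : ¬ HasInducedCopy (KtriK n) H := by
  rintro ⟨S, ⟨f⟩⟩
  have adj : ∀ x y : W, H.Adj x y → (KtriK n).Adj (f x) (f y) := fun x y h =>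
    f.map_adj_iff.mpr h
  have nadj : ∀ x y : W, ¬ H.Adj x y → ¬ (KtriK n).Adj (f x) (f y) := fun x y h h' =>
    h (f.map_adj_iff.mp h')
  have ne : ∀ x y : W, x ≠ y → ((f x : Fin n ⊕ Fin n)) ≠ (f y) := by
    intro x y h h'
    exact h (f.injective (Subtype.ext h'))
  exact key n (f p) (f q) (f r) (f s) (adj _ _ hpq) (adj _ _ hqr) (adj _ _ hrs)
    (adj _ _ hsp) (nadj _ _ hpr) (nadj _ _ hqs) (ne _ _ hpr') (ne _ _ hqs')

/-- For `n ≥ 1`, `K_n ⊲ K_n` has no induced 4-cycle; consequently no induced subgraph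
isomorphic to `W_4` or to the complement of `BW_3`. -/
theorem KtriK_no_induced_C4 (n : ℕ) (hn : 1 ≤ n) :
    ¬ HasInducedCopy (KtriK n) (SimpleGraph.cycleGraph 4) ∧
    ¬ HasInducedCopy (KtriK n) W4 ∧
    ¬ HasInducedCopy (KtriK n) BW3ᶜ := by
  refine ⟨?_, ?_, ?_⟩
  · exact no_copy _ 0 1 2 3 (by decide) (by decide) (by decide) (by decide)
      (by decide) (by decide) (by decide) (by decide) n
  · have t : ∀ a b : Fin 5, (W4.Adj a b) ↔ (a ≠ b ∧ _) := fun a b => by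
      rw [W4, SimpleGraph.fromRel_adj]
    exact no_copy _ 0 1 2 3 ((t _ _).mpr (by decide)) ((t _ _).mpr (by decide))
      ((t _ _).mpr (by decide)) ((t _ _).mpr (by decide))
      (fun h => absurd ((t _ _).mp h) (by decide))
      (fun h => absurd ((t _ _).mp h) (by decide)) (by decide) (by decide) n
  · have t : ∀ a b : Fin 7, (BW3ᶜ.Adj a b) ↔ (a ≠ b ∧ ¬(a ≠ b ∧ _)) := fun a b => by
      rw [SimpleGraph.compl_adj, BW3, SimpleGraph.fromRel_adj]
    exact no_copy _ 6 0 4 2 ((t _ _).mpr (by decide)) ((t _ _).mpr (by decide))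
      ((t _ _).mpr (by decide)) ((t _ _).mpr (by decide))
      (fun h => absurd ((t _ _).mp h) (by decide))
      (fun h => absurd ((t _ _).mp h) (by decide)) (by decide) (by decide) n
end
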